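/- arXiv:1401.0171 — 2 statements merged into one kernel-verified Lean document; each statement's English description precedes it below -/
import Mathlib

section
/- Let H be a 3-partite 3-graph with a matchable FR-partition (𝓕, 𝓡, W). Let a, b, c ∈ V(H) lie in three different vertex classes, and let S ⊆ W be a set of superfluous vertices with at most one vertex in each vertex class. Then ν(H − ({a, b, c} ∪ S)) = ν(H) in each of the following cases: (1) a ∈ V(𝓕) and b ∈ W; (2) a ∈ R for some R ∈ 𝓡, b ∉ R, and c ∉ V(𝓡); (3) a ∈ W is essential for some R ∈ 𝓡, b is not essential for R in H − S, and c ∉ V(𝓡); (4) a ∈ W is not essential in H − S and b ∉ V(𝓡). -/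
noncomputable section

attribute [local instance] Classical.propDecidable

universe u

variable {α : Type u}

/-- A 3-partite 3-uniform multihypergraph: vertex classes `V1, V2, V3` and a
multiset of edges, each edge being a triple with one vertex in each class
(parallel edges are allowed via multiplicities). -/
structure TriSys (α : Type u) where
  V1 : Finset α
  V2 : Finset α
  V3 : Finset α
  h12 : Disjoint V1 V2
  h13 : Disjoint V1 V3
  h23 : Disjoint V2 V3
  edges : Multiset (α × α × α)
  mem1 : ∀ e ∈ edges, e.1 ∈ V1
  mem2 : ∀ e ∈ edges, e.2.1 ∈ V2
  mem3 : ∀ e ∈ edges, e.2.2 ∈ V3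

/-- The vertex set of an edge. -/
def evset (e : α × α × α) : Finset α := {e.1, e.2.1, e.2.2}

/-- The coordinates of an edge, indexed by `Fin 3`. -/
def ecoord (e : α × α × α) : Fin 3 → α := ![e.1, e.2.1, e.2.2]

namespace TriSys

def verts (H : TriSys α) : Finset α := H.V1 ∪ H.V2 ∪ H.V3

/-- The vertex classes, indexed by `Fin 3`. -/
def cls (H : TriSys α) : Fin 3 → Finset α := ![H.V1, H.V2, H.V3]

/-- A matching: a set of (pairwise vertex-disjoint) edges. -/
def IsMatching (H : TriSys α) (M : Finset (α × α × α)) : Prop :=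
  (∀ e ∈ M, e ∈ H.edges) ∧
  (↑M : Set (α × α × α)).Pairwise fun e f => Disjoint (evset e) (evset f)

/-- The matching number ν. -/
def nu (H : TriSys α) : ℕ :=
  sSup {n : ℕ | ∃ M : Finset (α × α × α), H.IsMatching M ∧ M.card = n}

/-- A vertex cover: a set of vertices meeting every edge. -/
def IsCover (H : TriSys α) (T : Finset α) : Prop :=
  ∀ e ∈ H.edges, ∃ v ∈ T, v ∈ evset e

/-- The vertex cover number τ. -/
def tau (H : TriSys α) : ℕ :=
  sInf {n : ℕ | ∃ T : Finset α, H.IsCover T ∧ T.card = n}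

/-- Deletion of a set of vertices (and all edges meeting it). -/
def delete (H : TriSys α) (S : Finset α) : TriSys α where
  V1 := H.V1 \ S
  V2 := H.V2 \ S
  V3 := H.V3 \ S
  h12 := H.h12.mono Finset.sdiff_subset Finset.sdiff_subset
  h13 := H.h13.mono Finset.sdiff_subset Finset.sdiff_subset
  h23 := H.h23.mono Finset.sdiff_subset Finset.sdiff_subset
  edges := H.edges.filter fun e => e.1 ∉ S ∧ e.2.1 ∉ S ∧ e.2.2 ∉ S
  mem1 := fun e he => by
    rw [Multiset.mem_filter] at he
    exact Finset.mem_sdiff.mpr ⟨H.mem1 e he.1, he.2.1⟩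
  mem2 := fun e he => by
    rw [Multiset.mem_filter] at he
    exact Finset.mem_sdiff.mpr ⟨H.mem2 e he.1, he.2.2.1⟩
  mem3 := fun e he => by
    rw [Multiset.mem_filter] at he
    exact Finset.mem_sdiff.mpr ⟨H.mem3 e he.1, he.2.2.2⟩

end TriSys

/-- The four edges of a truncated Fano plane on vertices `a,b,c,x,y,z`
(with classes `{a,x} ⊆ V1`, `{b,y} ⊆ V2`, `{c,z} ⊆ V3`). -/
def FanoEdges (a b c x y z : α) : Finset (α × α × α) :=
  {(a, b, c), (a, y, z), (x, b, z), (x, y, c)}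

/-- The supports of the edges of `H` induced on a vertex subset `F`. -/
def inducedEdges (H : TriSys α) (F : Finset α) : Finset (α × α × α) :=
  (H.edges.filter fun e => evset e ⊆ F).toFinset

/-- `H` induces a truncated multi-Fano plane on the six-element set `F`. -/
def IsMultiFano (H : TriSys α) (F : Finset α) : Prop :=
  ∃ a b c x y z : α,
    a ∈ H.V1 ∧ x ∈ H.V1 ∧ b ∈ H.V2 ∧ y ∈ H.V2 ∧ c ∈ H.V3 ∧ z ∈ H.V3 ∧
    a ≠ x ∧ b ≠ y ∧ c ≠ z ∧
    F = {a, b, c, x, y, z} ∧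
    inducedEdges H F = FanoEdges a b c x y z

/-- The data of an FR-partition: the families `𝓕` and `𝓡` and the set `W`. -/
structure FRData (α : Type u) where
  Ffam : Finset (Finset α)
  Rfam : Finset (Finset α)
  W : Finset α

/-- The union of the members of a family of sets. -/
def famUnion (G : Finset (Finset α)) : Finset α := G.biUnion id

/-- `(𝓕, 𝓡, W)` is an FR-partition of `H`. -/
def IsFRPartition (H : TriSys α) (P : FRData α) : Prop :=
  (∀ A ∈ P.Ffam, ∀ B ∈ P.Ffam, A ≠ B → Disjoint A B) ∧
  (∀ A ∈ P.Rfam, ∀ B ∈ P.Rfam, A ≠ B → Disjoint A B) ∧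
  (∀ A ∈ P.Ffam, ∀ B ∈ P.Rfam, Disjoint A B) ∧
  (∀ A ∈ P.Ffam, Disjoint A P.W) ∧
  (∀ B ∈ P.Rfam, Disjoint B P.W) ∧
  famUnion P.Ffam ∪ famUnion P.Rfam ∪ P.W = H.verts ∧
  (∀ A ∈ P.Ffam, IsMultiFano H A) ∧
  (∀ B ∈ P.Rfam, ∃ r1 ∈ H.V1, ∃ r2 ∈ H.V2, ∃ r3 ∈ H.V3, B = {r1, r2, r3}) ∧
  P.Ffam.card + P.Rfam.card = H.nu

/-- `w` is joined to `R` in the auxiliary bipartite graph `B_i`: some edge of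
`H` contains `w` and two vertices of `R`. -/
def RAdj (H : TriSys α) (R : Finset α) (w : α) : Prop :=
  ∃ e ∈ H.edges, w ∈ evset e ∧ 2 ≤ (evset e ∩ R).card

/-- The auxiliary bipartite graph on `Rfam` and `Wi` has a matching
saturating `Rfam`. -/
def SaturatingR (H : TriSys α) (Rfam : Finset (Finset α)) (Wi : Finset α) : Prop :=
  ∃ f : Finset α → α, Set.InjOn f ↑Rfam ∧ ∀ R ∈ Rfam, f R ∈ Wi ∧ RAdj H R (f R)

/-- Matchability of an FR-partition. -/
def IsMatchable (H : TriSys α) (P : FRData α) : Prop :=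
  ∀ i : Fin 3, SaturatingR H P.Rfam (P.W ∩ H.cls i)

/-- The edge-home property: every edge is an `F`-edge or an `R`-edge. -/
def EdgeHome (H : TriSys α) (P : FRData α) : Prop :=
  ∀ e ∈ H.edges,
    (∃ A ∈ P.Ffam, evset e ⊆ A) ∨ (∃ B ∈ P.Rfam, 2 ≤ (evset e ∩ B).card)

/-- A home-base partition: a matchable FR-partition with the edge-home
property. -/
def IsHomeBasePartition (H : TriSys α) (P : FRData α) : Prop :=
  IsFRPartition H P ∧ IsMatchable H P ∧ EdgeHome H P

/-- A home-base hypergraph: one admitting a home-base partition. -/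
def IsHomeBase (H : TriSys α) : Prop :=
  ∃ P : FRData α, IsHomeBasePartition H P

/-- The neighborhood of a family `U` of `R`'s in the auxiliary bipartite
graph with `W`-side `Wi`. -/
def RNbhd (H : TriSys α) (Wi : Finset α) (U : Finset (Finset α)) : Finset α :=
  Wi.filter fun w => ∃ R ∈ U, RAdj H R w

/-- `C` is an essential subset of `Wi` in the auxiliary bipartite graph:
`C = N(U)` for some `U ⊆ Rfam` with `|U| = |C|`. -/
def EssentialSet (H : TriSys α) (Rfam : Finset (Finset α)) (Wi : Finset α)
    (C : Finset α) : Prop :=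
  ∃ U ⊆ Rfam, U.card = C.card ∧ RNbhd H Wi U = C

/-- `w` is a superfluous vertex of `Wi`: it lies in no essential subset
(equivalently, outside the maximal essential subset). -/
def Superfluous (H : TriSys α) (Rfam : Finset (Finset α)) (Wi : Finset α)
    (w : α) : Prop :=
  w ∈ Wi ∧ ∀ C, EssentialSet H Rfam Wi C → w ∉ C

/-- `w` is a superfluous `W`-vertex of the FR-partition `P` (in its class). -/
def SuperfluousVert (H : TriSys α) (P : FRData α) (w : α) : Prop :=
  ∃ i : Fin 3, Superfluous H P.Rfam (P.W ∩ H.cls i) w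

/-- `v` is an essential `W`-vertex of the FR-partition `P`. -/
def EssentialVertIn (H : TriSys α) (P : FRData α) (v : α) : Prop :=
  ∃ i : Fin 3, EssentialSet H P.Rfam (P.W ∩ H.cls i) {v}

/-- `v` is essential for `R`: it is the unique neighbor of `R` in some `B_i`. -/
def EssentialForIn (H : TriSys α) (P : FRData α) (R : Finset α) (v : α) : Prop :=
  ∃ i : Fin 3, RNbhd H (P.W ∩ H.cls i) {R} = {v}

/-- The neighborhood, inside vertex class `j`, of a set `X` of class-`k`
vertices in the link graph of `H` over the remaining vertex class. -/
def nbr (H : TriSys α) (j k : Fin 3) (X : Finset α) : Finset α :=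
  (H.cls j).filter fun v => ∃ e ∈ H.edges, ecoord e j = v ∧ ecoord e k ∈ X

/-- A cromulent triple `(Y1, Y2, X)` with `Y1 ⊆ V_i`, `Y2 ⊆ V_j`, `X ⊆ V_k`. -/
def IsCromulent (H : TriSys α) (i j k : Fin 3) (Y1 Y2 X : Finset α) : Prop :=
  i ≠ j ∧ i ≠ k ∧ j ≠ k ∧
  Y1.Nonempty ∧ Y2.Nonempty ∧ X.Nonempty ∧
  Y1 ⊆ H.cls i ∧ Y2 ⊆ H.cls j ∧ X ⊆ H.cls k ∧
  Y1.card = Y2.card ∧ Y1.card ≤ X.card ∧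
  nbr H j k X = Y2 ∧
  (∃ M : Finset (α × α × α), H.IsMatching M ∧ M.card = Y1.card ∧
    ∀ e ∈ M, evset e ⊆ Y1 ∪ Y2 ∪ X) ∧
  IsHomeBase (H.delete (Y1 ∪ Y2 ∪ X)) ∧
  (H.delete (Y1 ∪ Y2 ∪ X)).nu + Y1.card = H.nu ∧
  ∀ P : FRData α, IsHomeBasePartition (H.delete (Y1 ∪ Y2 ∪ X)) P →
    nbr H i k X ⊆ Y1 ∪ famUnion P.Rfam ∪ famUnion P.Ffam

/-- A perfectly cromulent triple: condition (5) is strengthened to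
`N_{Lk_{V_j}}(X) = Y1`. -/
def IsPerfCromulent (H : TriSys α) (i j k : Fin 3) (Y1 Y2 X : Finset α) : Prop :=
  i ≠ j ∧ i ≠ k ∧ j ≠ k ∧
  Y1.Nonempty ∧ Y2.Nonempty ∧ X.Nonempty ∧
  Y1 ⊆ H.cls i ∧ Y2 ⊆ H.cls j ∧ X ⊆ H.cls k ∧
  Y1.card = Y2.card ∧ Y1.card ≤ X.card ∧
  nbr H j k X = Y2 ∧
  (∃ M : Finset (α × α × α), H.IsMatching M ∧ M.card = Y1.card ∧
    ∀ e ∈ M, evset e ⊆ Y1 ∪ Y2 ∪ X) ∧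
  IsHomeBase (H.delete (Y1 ∪ Y2 ∪ X)) ∧
  (H.delete (Y1 ∪ Y2 ∪ X)).nu + Y1.card = H.nu ∧
  nbr H i k X = Y1

/-- The link graph of `H` over the class other than `j, k` has a perfect
matching, encoded as a bijection from class `j` onto class `k` realized by
edges of `H`. -/
def LinkPerfectMatching (H : TriSys α) (j k : Fin 3) : Prop :=
  ∃ f : α → α, Set.InjOn f ↑(H.cls j) ∧ (H.cls j).image f = H.cls k ∧
    ∀ v ∈ H.cls j, ∃ e ∈ H.edges, ecoord e j = v ∧ ecoord e k = f v

/-- A proper FR-partition: no `R ∈ 𝓡` together with an edge consisting of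
three `W`-vertices induces a truncated (multi-)Fano plane. -/
def IsProper (H : TriSys α) (P : FRData α) : Prop :=
  ¬ ∃ R ∈ P.Rfam, ∃ e ∈ H.edges, evset e ⊆ P.W ∧ IsMultiFano H (R ∪ evset e)

section MonsterAux

variable {α : Type u}

lemma TriSys.cls_zero (H : TriSys α) : H.cls 0 = H.V1 := rfl
lemma TriSys.cls_one (H : TriSys α) : H.cls 1 = H.V2 := rfl
lemma TriSys.cls_two (H : TriSys α) : H.cls 2 = H.V3 := rfl

lemma TriSys.cls_disjoint (H : TriSys α) {i j : Fin 3} (h : i ≠ j) :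
    Disjoint (H.cls i) (H.cls j) := by
  fin_cases i <;> fin_cases j <;>
    first
      | exact absurd rfl h
      | exact H.h12 | exact H.h13 | exact H.h23
      | exact H.h12.symm | exact H.h13.symm | exact H.h23.symm

lemma TriSys.cls_eq_of_mem (H : TriSys α) {v : α} {i j : Fin 3}
    (hi : v ∈ H.cls i) (hj : v ∈ H.cls j) : i = j := by
  by_contra hne
  exact Finset.disjoint_left.1 (H.cls_disjoint hne) hi hj

lemma TriSys.ne_of_cls (H : TriSys α) {v v' : α} {i j : Fin 3} (hne : i ≠ j)
    (hi : v ∈ H.cls i) (hj : v' ∈ H.cls j) : v ≠ v' := by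
  rintro rfl; exact hne (H.cls_eq_of_mem hi hj)

lemma mem_evset {e : α × α × α} {v : α} :
    v ∈ evset e ↔ v = e.1 ∨ v = e.2.1 ∨ v = e.2.2 := by
  simp [evset]

lemma fst_mem_evset (e : α × α × α) : e.1 ∈ evset e := mem_evset.2 (Or.inl rfl)
lemma snd_mem_evset (e : α × α × α) : e.2.1 ∈ evset e := mem_evset.2 (Or.inr (Or.inl rfl))
lemma trd_mem_evset (e : α × α × α) : e.2.2 ∈ evset e := mem_evset.2 (Or.inr (Or.inr rfl))

lemma TriSys.coords_ne (H : TriSys α) {e : α × α × α} (he : e ∈ H.edges) :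
    e.1 ≠ e.2.1 ∧ e.1 ≠ e.2.2 ∧ e.2.1 ≠ e.2.2 :=
  ⟨H.ne_of_cls (by decide : (0 : Fin 3) ≠ 1) (H.mem1 e he) (H.mem2 e he),
   H.ne_of_cls (by decide : (0 : Fin 3) ≠ 2) (H.mem1 e he) (H.mem3 e he),
   H.ne_of_cls (by decide : (1 : Fin 3) ≠ 2) (H.mem2 e he) (H.mem3 e he)⟩

/-- structure of an edge witnessing `RAdj`: it consists of `w` together with
two vertices of `R`, lying outside the class of `w`. -/
lemma radj_structure (H : TriSys α) {R : Finset α} {w : α} {t : Fin 3}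
    (hwR : w ∉ R) (hwt : w ∈ H.cls t) (h : RAdj H R w) :
    ∃ e ∈ H.edges, w ∈ evset e ∧
      ∀ v ∈ evset e, v = w ∨ (v ∈ R ∧ v ∉ H.cls t) := by
  obtain ⟨e, he, hwe, hcard⟩ := h
  refine ⟨e, he, hwe, ?_⟩
  have h1 : e.1 ∈ H.cls 0 := H.mem1 e he
  have h2 : e.2.1 ∈ H.cls 1 := H.mem2 e he
  have h3 : e.2.2 ∈ H.cls 2 := H.mem3 e he
  obtain ⟨n12, n13, n23⟩ := H.coords_ne he
  have key : ∀ p q : α, p ∈ H.cls 0 ∨ p ∈ H.cls 1 ∨ p ∈ H.cls 2 →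
      q ∈ H.cls 0 ∨ q ∈ H.cls 1 ∨ q ∈ H.cls 2 →
      p ≠ q → evset e ∩ R ⊆ {p, q} → p ∈ R ∧ q ∈ R := by
    intro p q _ _ hpq hsub
    have hc2 : ({p, q} : Finset α).card = 2 := Finset.card_pair hpq
    have heq : evset e ∩ R = {p, q} :=
      Finset.eq_of_subset_of_card_le hsub (by omega)
    constructor
    · have hp : p ∈ evset e ∩ R := heq ▸ (by simp)
      exact (Finset.mem_inter.1 hp).2
    · have hq : q ∈ evset e ∩ R := heq ▸ (by simp)
      exact (Finset.mem_inter.1 hq).2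
  rcases mem_evset.1 hwe with hw | hw | hw
  · -- w = e.1, class 0
    have ht : t = 0 := H.cls_eq_of_mem (hw ▸ hwt) h1
    subst ht
    have hR : e.2.1 ∈ R ∧ e.2.2 ∈ R := by
      refine key _ _ (Or.inr (Or.inl h2)) (Or.inr (Or.inr h3)) n23 ?_
      intro v hv
      rcases Finset.mem_inter.1 hv with ⟨hv1, hv2⟩
      rcases mem_evset.1 hv1 with rfl | rfl | rfl
      · exact absurd hv2 (hw ▸ hwR)
      · simp
      · simp
    intro v hv
    rcases mem_evset.1 hv with rfl | rfl | rfl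
    · exact Or.inl hw.symm
    · exact Or.inr ⟨hR.1, fun hc => (by decide : ¬ ((1:Fin 3) = 0)) (H.cls_eq_of_mem h2 hc)⟩
    · exact Or.inr ⟨hR.2, fun hc => (by decide : ¬ ((2:Fin 3) = 0)) (H.cls_eq_of_mem h3 hc)⟩
  · -- w = e.2.1, class 1
    have ht : t = 1 := H.cls_eq_of_mem (hw ▸ hwt) h2
    subst ht
    have hR : e.1 ∈ R ∧ e.2.2 ∈ R := by
      refine key _ _ (Or.inl h1) (Or.inr (Or.inr h3)) n13 ?_
      intro v hv
      rcases Finset.mem_inter.1 hv with ⟨hv1, hv2⟩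
      rcases mem_evset.1 hv1 with rfl | rfl | rfl
      · simp
      · exact absurd hv2 (hw ▸ hwR)
      · simp
    intro v hv
    rcases mem_evset.1 hv with rfl | rfl | rfl
    · exact Or.inr ⟨hR.1, fun hc => (by decide : ¬ ((0:Fin 3) = 1)) (H.cls_eq_of_mem h1 hc)⟩
    · exact Or.inl hw.symm
    · exact Or.inr ⟨hR.2, fun hc => (by decide : ¬ ((2:Fin 3) = 1)) (H.cls_eq_of_mem h3 hc)⟩
  · -- w = e.2.2, class 2
    have ht : t = 2 := H.cls_eq_of_mem (hw ▸ hwt) h3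
    subst ht
    have hR : e.1 ∈ R ∧ e.2.1 ∈ R := by
      refine key _ _ (Or.inl h1) (Or.inr (Or.inl h2)) n12 ?_
      intro v hv
      rcases Finset.mem_inter.1 hv with ⟨hv1, hv2⟩
      rcases mem_evset.1 hv1 with rfl | rfl | rfl
      · simp
      · simp
      · exact absurd hv2 (hw ▸ hwR)
    intro v hv
    rcases mem_evset.1 hv with rfl | rfl | rfl
    · exact Or.inr ⟨hR.1, fun hc => (by decide : ¬ ((0:Fin 3) = 2)) (H.cls_eq_of_mem h1 hc)⟩
    · exact Or.inr ⟨hR.2, fun hc => (by decide : ¬ ((1:Fin 3) = 2)) (H.cls_eq_of_mem h2 hc)⟩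
    · exact Or.inl hw.symm

end MonsterAux
section MonsterAux2

variable {α : Type u}

lemma mem_rnbhd {H : TriSys α} {Wi : Finset α} {U : Finset (Finset α)} {w : α} :
    w ∈ RNbhd H Wi U ↔ w ∈ Wi ∧ ∃ R ∈ U, RAdj H R w := by
  simp [RNbhd]

lemma mem_rnbhd_singleton {H : TriSys α} {Wi : Finset α} {R : Finset α} {w : α} :
    w ∈ RNbhd H Wi {R} ↔ w ∈ Wi ∧ RAdj H R w := by
  simp [RNbhd]

lemma rnbhd_sdiff (H : TriSys α) (Wi X : Finset α) (U : Finset (Finset α)) :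
    RNbhd H (Wi \ X) U = RNbhd H Wi U \ X := by
  ext w
  simp only [mem_rnbhd, Finset.mem_sdiff]
  tauto

lemma rnbhd_union (H : TriSys α) (Wi : Finset α) (U V : Finset (Finset α)) :
    RNbhd H Wi (U ∪ V) = RNbhd H Wi U ∪ RNbhd H Wi V := by
  ext w
  simp only [mem_rnbhd, Finset.mem_union, Finset.mem_insert]
  constructor
  · rintro ⟨hw, R, hR | hR, hadj⟩
    · exact Or.inl ⟨hw, R, hR, hadj⟩
    · exact Or.inr ⟨hw, R, hR, hadj⟩
  · rintro (⟨hw, R, hR, hadj⟩ | ⟨hw, R, hR, hadj⟩)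
    · exact ⟨hw, R, Or.inl hR, hadj⟩
    · exact ⟨hw, R, Or.inr hR, hadj⟩

lemma rnbhd_inter_subset (H : TriSys α) (Wi : Finset α) (U V : Finset (Finset α)) :
    RNbhd H Wi (U ∩ V) ⊆ RNbhd H Wi U ∩ RNbhd H Wi V := by
  intro w hw
  rw [mem_rnbhd] at hw
  obtain ⟨hwWi, R, hR, hadj⟩ := hw
  rw [Finset.mem_inter] at hR ⊢
  exact ⟨mem_rnbhd.2 ⟨hwWi, R, hR.1, hadj⟩, mem_rnbhd.2 ⟨hwWi, R, hR.2, hadj⟩⟩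

lemma rnbhd_empty (H : TriSys α) (Wi : Finset α) :
    RNbhd H Wi (∅ : Finset (Finset α)) = ∅ := by
  ext w; simp [mem_rnbhd]

lemma rnbhd_mono_right {H : TriSys α} {Wi : Finset α} {U V : Finset (Finset α)}
    (h : U ⊆ V) : RNbhd H Wi U ⊆ RNbhd H Wi V := by
  intro w hw
  rw [mem_rnbhd] at hw ⊢
  obtain ⟨h1, R, hR, h2⟩ := hw
  exact ⟨h1, R, h hR, h2⟩

/-- Hall's condition from a saturating matching. -/
lemma hall_of_sat {H : TriSys α} {Rf : Finset (Finset α)} {Wi : Finset α}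
    (h : SaturatingR H Rf Wi) :
    ∀ U ⊆ Rf, U.card ≤ (RNbhd H Wi U).card := by
  obtain ⟨f, hinj, hf⟩ := h
  intro U hU
  have himg : U.image f ⊆ RNbhd H Wi U := by
    intro w hw
    obtain ⟨R, hR, rfl⟩ := Finset.mem_image.1 hw
    exact mem_rnbhd.2 ⟨(hf R (hU hR)).1, R, hR, (hf R (hU hR)).2⟩
  calc U.card = (U.image f).card :=
        (Finset.card_image_of_injOn (hinj.mono (by exact_mod_cast hU))).symm
    _ ≤ _ := Finset.card_le_card himg

/-- Hall's theorem, adapted. -/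
lemma sat_of_hall (H : TriSys α) (Rf : Finset (Finset α)) (Wi : Finset α)
    (hα : Nonempty α)
    (h : ∀ U ⊆ Rf, U.card ≤ (RNbhd H Wi U).card) : SaturatingR H Rf Wi := by
  classical
  have key := (Finset.all_card_le_biUnion_card_iff_exists_injective
    (fun R : {R // R ∈ Rf} => RNbhd H Wi {R.1})).1 ?_
  · obtain ⟨f, hinj, hf⟩ := key
    refine ⟨fun R => if hR : R ∈ Rf then f ⟨R, hR⟩ else hα.some, ?_, ?_⟩
    · intro R hR R' hR' heq
      simp only [Finset.mem_coe] at hR hR'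
      dsimp only at heq
      rw [dif_pos hR, dif_pos hR'] at heq
      exact congrArg Subtype.val (hinj heq)
    · intro R hR
      dsimp only
      rw [dif_pos hR]
      have := hf ⟨R, hR⟩
      exact mem_rnbhd_singleton.1 this
  · intro s
    have hmap : s.biUnion (fun R => RNbhd H Wi {R.1}) =
        RNbhd H Wi (s.image Subtype.val) := by
      ext w
      constructor
      · intro hw
        obtain ⟨R, hR, hw2⟩ := Finset.mem_biUnion.1 hw
        rw [mem_rnbhd_singleton] at hw2
        exact mem_rnbhd.2 ⟨hw2.1, R.1, Finset.mem_image.2 ⟨R, hR, rfl⟩, hw2.2⟩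
      · intro hw
        obtain ⟨hwWi, R, hR, hadj⟩ := mem_rnbhd.1 hw
        obtain ⟨R', hR', rfl⟩ := Finset.mem_image.1 hR
        exact Finset.mem_biUnion.2 ⟨R', hR', mem_rnbhd_singleton.2 ⟨hwWi, hadj⟩⟩
    rw [hmap]
    have hsub : s.image Subtype.val ⊆ Rf := by
      intro R hR
      obtain ⟨R', _, rfl⟩ := Finset.mem_image.1 hR
      exact R'.2
    have := h _ hsub
    rwa [Finset.card_image_of_injOn (Set.injOn_of_injective Subtype.val_injective)] at this

lemma sat_mono {H : TriSys α} {Rf Rf' : Finset (Finset α)} {Wi : Finset α}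
    (h : SaturatingR H Rf Wi) (hsub : Rf' ⊆ Rf) : SaturatingR H Rf' Wi := by
  obtain ⟨f, hinj, hf⟩ := h
  exact ⟨f, hinj.mono (by exact_mod_cast hsub), fun R hR => hf R (hsub hR)⟩

/-- A superfluous vertex can be avoided by a saturating matching. -/
lemma sat_avoid_superfluous {H : TriSys α} {Rf : Finset (Finset α)} {Wi : Finset α}
    {s : α} (hα : Nonempty α) (hsat : SaturatingR H Rf Wi)
    (hs : ∀ C, EssentialSet H Rf Wi C → s ∉ C) :
    SaturatingR H Rf (Wi \ {s}) := by
  apply sat_of_hall H Rf _ hα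
  intro U hU
  rw [rnbhd_sdiff]
  have h1 : U.card ≤ (RNbhd H Wi U).card := hall_of_sat hsat U hU
  by_cases hsU : s ∈ RNbhd H Wi U
  · have hne : U.card ≠ (RNbhd H Wi U).card := by
      intro heq
      exact hs (RNbhd H Wi U) ⟨U, hU, heq, rfl⟩ hsU
    have hcard : (RNbhd H Wi U \ {s}).card = (RNbhd H Wi U).card - 1 := by
      rw [Finset.sdiff_singleton_eq_erase, Finset.card_erase_of_mem hsU]
    omega
  · rw [Finset.sdiff_singleton_eq_erase, Finset.erase_eq_of_notMem hsU]
    exact h1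

/-- Each `R` has a neighbor. -/
lemma rnbhd_nonempty {H : TriSys α} {Rf : Finset (Finset α)} {Wi : Finset α}
    (hsat : SaturatingR H Rf Wi) {R : Finset α} (hR : R ∈ Rf) :
    (RNbhd H Wi {R}).Nonempty := by
  obtain ⟨f, _, hf⟩ := hsat
  exact ⟨f R, mem_rnbhd_singleton.2 ⟨(hf R hR).1, (hf R hR).2⟩⟩

/-- At most one `R` can be "stuck" (have all its neighbors inside `{x}`). -/
lemma stuck_unique {H : TriSys α} {Rf : Finset (Finset α)} {Wi : Finset α}
    (hsat : SaturatingR H Rf Wi) {x : α} {R1 R2 : Finset α}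
    (h1 : R1 ∈ Rf) (h2 : R2 ∈ Rf) (hne : R1 ≠ R2)
    (hs1 : RNbhd H (Wi \ {x}) {R1} = ∅) (hs2 : RNbhd H (Wi \ {x}) {R2} = ∅) :
    False := by
  have hU : ({R1, R2} : Finset (Finset α)) ⊆ Rf := by
    intro R hR
    rcases Finset.mem_insert.1 hR with rfl | hR
    · exact h1
    · exact (Finset.mem_singleton.1 hR) ▸ h2
  have hcard : ({R1, R2} : Finset (Finset α)).card = 2 := Finset.card_pair hne
  have hhall := hall_of_sat hsat _ hU
  have hsub : RNbhd H Wi {R1, R2} ⊆ {x} := by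
    intro w hw
    obtain ⟨hwWi, R, hR, hadj⟩ := mem_rnbhd.1 hw
    by_contra hwx
    have hwmem : w ∈ Wi \ {x} := Finset.mem_sdiff.2 ⟨hwWi, by simpa using hwx⟩
    rcases Finset.mem_insert.1 hR with rfl | hR
    · exact absurd (mem_rnbhd_singleton.2 ⟨hwmem, hadj⟩) (by rw [hs1]; simp)
    · rw [Finset.mem_singleton] at hR; subst hR
      exact absurd (mem_rnbhd_singleton.2 ⟨hwmem, hadj⟩) (by rw [hs2]; simp)
  have := Finset.card_le_card hsub
  simp only [Finset.card_singleton] at this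
  omega

/-- Key lemma for case (4): either `a` can be avoided outright, or there is a
tight set `U` of size at least 2 any single member of which may be dropped. -/
lemma avoid_nonessential {H : TriSys α} {Rf : Finset (Finset α)} {Wi : Finset α}
    {a : α} (hα : Nonempty α) (hsat : SaturatingR H Rf Wi)
    (ha : ∀ U ⊆ Rf, U.card = 1 → RNbhd H Wi U ≠ {a}) :
    SaturatingR H Rf (Wi \ {a}) ∨
      ∃ U ⊆ Rf, 2 ≤ U.card ∧
        ∀ R ∈ U, SaturatingR H (Rf.erase R) (Wi \ {a}) := by
  classical
  have hall := hall_of_sat hsat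
  set T : Finset (Finset (Finset α)) :=
    Rf.powerset.filter
      (fun U => U.card = (RNbhd H Wi U).card ∧ a ∈ RNbhd H Wi U) with hT
  by_cases hTe : T = ∅
  · left
    apply sat_of_hall H Rf _ hα
    intro U hU
    rw [rnbhd_sdiff]
    by_cases haU : a ∈ RNbhd H Wi U
    · have hne : U.card ≠ (RNbhd H Wi U).card := by
        intro heq
        have : U ∈ T := Finset.mem_filter.2 ⟨Finset.mem_powerset.2 hU, heq, haU⟩
        rw [hTe] at this; exact absurd this (Finset.notMem_empty _)
      have h1 := hall U hU
      have hcard : (RNbhd H Wi U \ {a}).card = (RNbhd H Wi U).card - 1 := by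
        rw [Finset.sdiff_singleton_eq_erase, Finset.card_erase_of_mem haU]
      omega
    · rw [Finset.sdiff_singleton_eq_erase, Finset.erase_eq_of_notMem haU]
      exact hall U hU
  · right
    obtain ⟨U₀, hU₀⟩ := Finset.nonempty_iff_ne_empty.2 hTe
    obtain ⟨Um, hUm, hUmin⟩ := Finset.exists_min_image T Finset.card ⟨U₀, hU₀⟩
    obtain ⟨hUmRf, hUmtight, haUm⟩ := Finset.mem_filter.1 hUm
    rw [Finset.mem_powerset] at hUmRf
    have hUm2 : 2 ≤ Um.card := by
      rcases Nat.lt_or_ge Um.card 2 with h | h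
      · interval_cases hc : Um.card
        · rw [Finset.card_eq_zero.1 hc] at haUm
          rw [rnbhd_empty] at haUm
          exact absurd haUm (Finset.notMem_empty _)
        · exfalso
          apply ha Um hUmRf hc
          have : (RNbhd H Wi Um).card = 1 := by omega
          obtain ⟨x, hx⟩ := Finset.card_eq_one.1 this
          rw [hx] at haUm ⊢
          rw [Finset.mem_singleton.1 haUm]
      · exact h
    refine ⟨Um, hUmRf, hUm2, ?_⟩
    intro R₀ hR₀
    apply sat_of_hall H _ _ hα
    intro V hV
    have hVRf : V ⊆ Rf := hV.trans (Finset.erase_subset _ _)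
    rw [rnbhd_sdiff]
    by_cases haV : a ∈ RNbhd H Wi V
    · -- show strict inequality
      have hstrict : V.card < (RNbhd H Wi V).card := by
        rcases Nat.lt_or_ge V.card (RNbhd H Wi V).card with h | h
        · exact h
        · exfalso
          have htight : V.card = (RNbhd H Wi V).card :=
            le_antisymm (hall V hVRf) h
          -- intersection of tight sets is tight and contains a in its nbhd
          have hUuV : (Um ∪ V).card ≤ (RNbhd H Wi (Um ∪ V)).card :=
            hall _ (Finset.union_subset hUmRf hVRf)
          have hUiV : (Um ∩ V).card ≤ (RNbhd H Wi (Um ∩ V)).card :=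
            hall _ ((Finset.inter_subset_left).trans hUmRf)
          have hsub1 := Finset.card_le_card (rnbhd_inter_subset H Wi Um V)
          have hcc : (RNbhd H Wi Um ∪ RNbhd H Wi V).card
              + (RNbhd H Wi Um ∩ RNbhd H Wi V).card
              = (RNbhd H Wi Um).card + (RNbhd H Wi V).card :=
            Finset.card_union_add_card_inter _ _
          have hcc2 : (Um ∪ V).card + (Um ∩ V).card = Um.card + V.card :=
            Finset.card_union_add_card_inter _ _
          rw [← rnbhd_union] at hcc
          -- conclude tightness of the intersection & equality of nbhds
          have hIcard : (Um ∩ V).card = (RNbhd H Wi (Um ∩ V)).card ∧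
              (RNbhd H Wi (Um ∩ V)).card = (RNbhd H Wi Um ∩ RNbhd H Wi V).card := by
            omega
          have hIeq : RNbhd H Wi (Um ∩ V) = RNbhd H Wi Um ∩ RNbhd H Wi V :=
            Finset.eq_of_subset_of_card_le (rnbhd_inter_subset H Wi Um V)
              (le_of_eq hIcard.2.symm)
          have haI : a ∈ RNbhd H Wi (Um ∩ V) := by
            rw [hIeq]
            exact Finset.mem_inter.2 ⟨haUm, haV⟩
          have hmemT : Um ∩ V ∈ T :=
            Finset.mem_filter.2 ⟨Finset.mem_powerset.2
              ((Finset.inter_subset_left).trans hUmRf), hIcard.1, haI⟩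
          have hminle := hUmin _ hmemT
          have hUmsub : Um ⊆ V := by
            have hinter : Um ∩ V = Um :=
              Finset.eq_of_subset_of_card_le (Finset.inter_subset_left) hminle
            intro x hx
            rw [← hinter] at hx
            exact (Finset.mem_inter.1 hx).2
          have : R₀ ∈ Rf.erase R₀ := hV (hUmsub hR₀)
          exact absurd this (Finset.notMem_erase _ _)
      have hcard : (RNbhd H Wi V \ {a}).card = (RNbhd H Wi V).card - 1 := by
        rw [Finset.sdiff_singleton_eq_erase, Finset.card_erase_of_mem haV]
      omega
    · rw [Finset.sdiff_singleton_eq_erase, Finset.erase_eq_of_notMem haV]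
      exact hall V hVRf

end MonsterAux2
section MonsterAux3

variable {α : Type u}

lemma TriSys.mem_delete_edges {H : TriSys α} {D : Finset α} {e : α × α × α} :
    e ∈ (H.delete D).edges ↔ e ∈ H.edges ∧ e.1 ∉ D ∧ e.2.1 ∉ D ∧ e.2.2 ∉ D := by
  simp [TriSys.delete, Multiset.mem_filter]

lemma TriSys.delete_cls (H : TriSys α) (D : Finset α) (i : Fin 3) :
    (H.delete D).cls i = H.cls i \ D := by
  fin_cases i <;> rfl

lemma radj_delete_iff {H : TriSys α} {S : Finset α} {R : Finset α} {w : α}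
    (hRS : ∀ v ∈ R, v ∉ S) (hwS : w ∉ S) (hwR : w ∉ R) :
    RAdj (H.delete S) R w ↔ RAdj H R w := by
  constructor
  · rintro ⟨e, he, hwe, hc⟩
    exact ⟨e, (TriSys.mem_delete_edges.1 he).1, hwe, hc⟩
  · rintro h
    obtain ⟨e, he, hwe, hc⟩ := h
    -- find the class of w to use structure lemma: w is one of the coordinates
    have hcls : ∃ t : Fin 3, w ∈ H.cls t := by
      rcases mem_evset.1 hwe with rfl | rfl | rfl
      · exact ⟨0, H.mem1 e he⟩
      · exact ⟨1, H.mem2 e he⟩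
      · exact ⟨2, H.mem3 e he⟩
    obtain ⟨t, hwt⟩ := hcls
    obtain ⟨e', he', hwe', hstr⟩ := radj_structure H hwR hwt ⟨e, he, hwe, hc⟩
    refine ⟨e', TriSys.mem_delete_edges.2 ⟨he', ?_, ?_, ?_⟩, hwe', ?_⟩
    · rcases hstr e'.1 (fst_mem_evset e') with rfl | ⟨hvR, _⟩
      · exact hwS
      · exact hRS _ hvR
    · rcases hstr e'.2.1 (snd_mem_evset e') with rfl | ⟨hvR, _⟩
      · exact hwS
      · exact hRS _ hvR
    · rcases hstr e'.2.2 (trd_mem_evset e') with rfl | ⟨hvR, _⟩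
      · exact hwS
      · exact hRS _ hvR
    · obtain ⟨e0, he0, hwe0, hc0⟩ : RAdj H R w := ⟨e, he, hwe, hc⟩
      -- recompute the card for e'
      have : ∀ v ∈ evset e', v = w ∨ v ∈ R := fun v hv => (hstr v hv).imp id And.left
      -- the two non-w vertices of e' lie in R; we need 2 ≤ |evset e' ∩ R|
      have h2 : ({e'.1, e'.2.1, e'.2.2} : Finset α) = evset e' := rfl
      obtain ⟨n12, n13, n23⟩ := H.coords_ne he'
      rcases mem_evset.1 hwe' with hw | hw | hw
      · have hm1 : e'.2.1 ∈ R := by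
          rcases hstr e'.2.1 (snd_mem_evset e') with h | h
          · exact absurd (h.trans hw).symm n12
          · exact h.1
        have hm2 : e'.2.2 ∈ R := by
          rcases hstr e'.2.2 (trd_mem_evset e') with h | h
          · exact absurd (h.trans hw).symm n13
          · exact h.1
        have : ({e'.2.1, e'.2.2} : Finset α) ⊆ evset e' ∩ R := by
          intro v hv
          rcases Finset.mem_insert.1 hv with rfl | hv
          · exact Finset.mem_inter.2 ⟨snd_mem_evset e', hm1⟩
          · rw [Finset.mem_singleton] at hv; subst hv
            exact Finset.mem_inter.2 ⟨trd_mem_evset e', hm2⟩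
        calc 2 = ({e'.2.1, e'.2.2} : Finset α).card := (Finset.card_pair n23).symm
          _ ≤ _ := Finset.card_le_card this
      · have hm1 : e'.1 ∈ R := by
          rcases hstr e'.1 (fst_mem_evset e') with h | h
          · exact absurd (h.trans hw) n12
          · exact h.1
        have hm2 : e'.2.2 ∈ R := by
          rcases hstr e'.2.2 (trd_mem_evset e') with h | h
          · exact absurd (h.trans hw).symm n23
          · exact h.1
        have : ({e'.1, e'.2.2} : Finset α) ⊆ evset e' ∩ R := by
          intro v hv
          rcases Finset.mem_insert.1 hv with rfl | hv
          · exact Finset.mem_inter.2 ⟨fst_mem_evset e', hm1⟩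
          · rw [Finset.mem_singleton] at hv; subst hv
            exact Finset.mem_inter.2 ⟨trd_mem_evset e', hm2⟩
        calc 2 = ({e'.1, e'.2.2} : Finset α).card := (Finset.card_pair n13).symm
          _ ≤ _ := Finset.card_le_card this
      · have hm1 : e'.1 ∈ R := by
          rcases hstr e'.1 (fst_mem_evset e') with h | h
          · exact absurd (h.trans hw) n13
          · exact h.1
        have hm2 : e'.2.1 ∈ R := by
          rcases hstr e'.2.1 (snd_mem_evset e') with h | h
          · exact absurd (h.trans hw) n23
          · exact h.1
        have : ({e'.1, e'.2.1} : Finset α) ⊆ evset e' ∩ R := by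
          intro v hv
          rcases Finset.mem_insert.1 hv with rfl | hv
          · exact Finset.mem_inter.2 ⟨fst_mem_evset e', hm1⟩
          · rw [Finset.mem_singleton] at hv; subst hv
            exact Finset.mem_inter.2 ⟨snd_mem_evset e', hm2⟩
        calc 2 = ({e'.1, e'.2.1} : Finset α).card := (Finset.card_pair n12).symm
          _ ≤ _ := Finset.card_le_card this

lemma rnbhd_delete {H : TriSys α} {S : Finset α} {Wi : Finset α}
    {U : Finset (Finset α)}
    (hWS : ∀ v ∈ Wi, v ∉ S) (hUS : ∀ R ∈ U, ∀ v ∈ R, v ∉ S)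
    (hUW : ∀ R ∈ U, ∀ v ∈ Wi, v ∉ R) :
    RNbhd (H.delete S) Wi U = RNbhd H Wi U := by
  ext w
  simp only [mem_rnbhd]
  constructor
  · rintro ⟨hw, R, hR, hadj⟩
    exact ⟨hw, R, hR,
      (radj_delete_iff (hUS R hR) (hWS w hw) (hUW R hR w hw)).1 hadj⟩
  · rintro ⟨hw, R, hR, hadj⟩
    exact ⟨hw, R, hR,
      (radj_delete_iff (hUS R hR) (hWS w hw) (hUW R hR w hw)).2 hadj⟩

/-- ν bounds -/
lemma TriSys.card_le_nu {H : TriSys α} {M : Finset (α × α × α)}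
    (hM : H.IsMatching M) : M.card ≤ H.nu := by
  apply le_csSup
  · refine ⟨H.edges.toFinset.card, ?_⟩
    rintro n ⟨M', hM', rfl⟩
    exact Finset.card_le_card (fun e he => Multiset.mem_toFinset.2 (hM'.1 e he))
  · exact ⟨M, hM, rfl⟩

lemma TriSys.matching_of_delete {H : TriSys α} {D : Finset α}
    {M : Finset (α × α × α)} (hM : (H.delete D).IsMatching M) : H.IsMatching M :=
  ⟨fun e he => (TriSys.mem_delete_edges.1 (hM.1 e he)).1, hM.2⟩

lemma TriSys.nu_delete_le (H : TriSys α) (D : Finset α) :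
    (H.delete D).nu ≤ H.nu := by
  apply csSup_le
  · exact ⟨0, ∅, ⟨by simp, by simp⟩, by simp⟩
  · rintro n ⟨M, hM, rfl⟩
    exact TriSys.card_le_nu (TriSys.matching_of_delete hM)

end MonsterAux3
section MonsterAux4

variable {α : Type u}

/-- If `D` meets a multi-Fano block `F` in at most two vertices, lying in two
different vertex classes, then some edge of the Fano block avoids `D`. -/
lemma fano_edge_avoid (H : TriSys α) (F D : Finset α) (hF : IsMultiFano H F)
    (p q : α) (tp tq : Fin 3) (hpq : tp ≠ tq)
    (hp : p ∈ H.cls tp) (hq : q ∈ H.cls tq)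
    (hD : ∀ v ∈ F, v ∈ D → v = p ∨ v = q) :
    ∃ e ∈ H.edges, evset e ⊆ F ∧ ∀ v ∈ evset e, v ∉ D := by
  obtain ⟨a, b, c, x, y, z, ha1, hx1, hb2, hy2, hc3, hz3, hax, hby, hcz, hFeq, hInd⟩ := hF
  have hedge : ∀ e ∈ FanoEdges a b c x y z, e ∈ H.edges ∧ evset e ⊆ F := by
    intro e he
    rw [← hInd] at he
    have := Multiset.mem_toFinset.1 he
    rw [Multiset.mem_filter] at this
    exact this
  have hE1 := hedge (a, b, c) (by simp [FanoEdges])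
  have hE2 := hedge (a, y, z) (by simp [FanoEdges])
  have hE3 := hedge (x, b, z) (by simp [FanoEdges])
  have hE4 := hedge (x, y, c) (by simp [FanoEdges])
  have haF : a ∈ F := hE1.2 (by simp [evset])
  have hbF : b ∈ F := hE1.2 (by simp [evset])
  have hcF : c ∈ F := hE1.2 (by simp [evset])
  have hxF : x ∈ F := hE3.2 (by simp [evset])
  have hyF : y ∈ F := hE2.2 (by simp [evset])
  have hzF : z ∈ F := hE2.2 (by simp [evset])
  have hpair : ∀ (t0 : Fin 3) (u v : α), u ∈ H.cls t0 → v ∈ H.cls t0 →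
      u ∈ F → v ∈ F → u ≠ v → u ∈ D → v ∈ D → False := by
    intro t0 u v hu hv huF hvF huv huD hvD
    rcases hD u huF huD with rfl | rfl <;> rcases hD v hvF hvD with rfl | rfl
    · exact huv rfl
    · exact hpq ((H.cls_eq_of_mem hp hu).trans (H.cls_eq_of_mem hq hv).symm)
    · exact hpq ((H.cls_eq_of_mem hp hv).trans (H.cls_eq_of_mem hq hu).symm)
    · exact huv rfl
  have h3cls : ∀ u1 u2 u3 : α, u1 ∈ H.cls 0 → u2 ∈ H.cls 1 → u3 ∈ H.cls 2 →
      u1 ∈ F → u2 ∈ F → u3 ∈ F → u1 ∈ D → u2 ∈ D → u3 ∈ D → False := by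
    intro u1 u2 u3 hc1 hc2 hc3' hF1 hF2 hF3 hD1 hD2 hD3
    rcases hD u1 hF1 hD1 with rfl | rfl <;> rcases hD u2 hF2 hD2 with rfl | rfl <;>
      rcases hD u3 hF3 hD3 with rfl | rfl
    all_goals first
      | exact (by decide : ¬((0:Fin 3)=1)) (H.cls_eq_of_mem hc1 hc2)
      | exact (by decide : ¬((0:Fin 3)=2)) (H.cls_eq_of_mem hc1 hc3')
      | exact (by decide : ¬((1:Fin 3)=2)) (H.cls_eq_of_mem hc2 hc3')
  by_cases h1 : a ∈ D ∨ x ∈ D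
  · by_cases h2 : b ∈ D ∨ y ∈ D
    · -- pair 3 (c, z) free
      have hcD : c ∉ D := by
        intro hc
        rcases h1 with h1 | h1 <;> rcases h2 with h2 | h2
        · exact h3cls a b c ha1 hb2 hc3 haF hbF hcF h1 h2 hc
        · exact h3cls a y c ha1 hy2 hc3 haF hyF hcF h1 h2 hc
        · exact h3cls x b c hx1 hb2 hc3 hxF hbF hcF h1 h2 hc
        · exact h3cls x y c hx1 hy2 hc3 hxF hyF hcF h1 h2 hc
      have hzD : z ∉ D := by
        intro hz
        rcases h1 with h1 | h1 <;> rcases h2 with h2 | h2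
        · exact h3cls a b z ha1 hb2 hz3 haF hbF hzF h1 h2 hz
        · exact h3cls a y z ha1 hy2 hz3 haF hyF hzF h1 h2 hz
        · exact h3cls x b z hx1 hb2 hz3 hxF hbF hzF h1 h2 hz
        · exact h3cls x y z hx1 hy2 hz3 hxF hyF hzF h1 h2 hz
      by_cases haD : a ∈ D <;> by_cases hbD : b ∈ D
      · have hxD : x ∉ D := fun h => hpair 0 a x ha1 hx1 haF hxF hax haD h
        have hyD : y ∉ D := fun h => hpair 1 b y hb2 hy2 hbF hyF hby hbD h
        refine ⟨(x, y, c), hE4.1, hE4.2, ?_⟩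
        intro v hv
        rcases mem_evset.1 hv with rfl | rfl | rfl <;> assumption
      · have hxD : x ∉ D := fun h => hpair 0 a x ha1 hx1 haF hxF hax haD h
        refine ⟨(x, b, z), hE3.1, hE3.2, ?_⟩
        intro v hv
        rcases mem_evset.1 hv with rfl | rfl | rfl <;> assumption
      · have hyD : y ∉ D := fun h => hpair 1 b y hb2 hy2 hbF hyF hby hbD h
        refine ⟨(a, y, z), hE2.1, hE2.2, ?_⟩
        intro v hv
        rcases mem_evset.1 hv with rfl | rfl | rfl <;> assumption
      · refine ⟨(a, b, c), hE1.1, hE1.2, ?_⟩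
        intro v hv
        rcases mem_evset.1 hv with rfl | rfl | rfl <;> assumption
    · -- pair 2 (b, y) free
      push_neg at h2
      obtain ⟨hbD, hyD⟩ := h2
      by_cases haD : a ∈ D <;> by_cases hcD : c ∈ D
      · have hxD : x ∉ D := fun h => hpair 0 a x ha1 hx1 haF hxF hax haD h
        have hzD : z ∉ D := fun h => hpair 2 c z hc3 hz3 hcF hzF hcz hcD h
        refine ⟨(x, b, z), hE3.1, hE3.2, ?_⟩
        intro v hv
        rcases mem_evset.1 hv with rfl | rfl | rfl <;> assumption
      · have hxD : x ∉ D := fun h => hpair 0 a x ha1 hx1 haF hxF hax haD h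
        refine ⟨(x, y, c), hE4.1, hE4.2, ?_⟩
        intro v hv
        rcases mem_evset.1 hv with rfl | rfl | rfl <;> assumption
      · have hzD : z ∉ D := fun h => hpair 2 c z hc3 hz3 hcF hzF hcz hcD h
        refine ⟨(a, y, z), hE2.1, hE2.2, ?_⟩
        intro v hv
        rcases mem_evset.1 hv with rfl | rfl | rfl <;> assumption
      · refine ⟨(a, b, c), hE1.1, hE1.2, ?_⟩
        intro v hv
        rcases mem_evset.1 hv with rfl | rfl | rfl <;> assumption
  · -- pair 1 (a, x) free
    push_neg at h1
    obtain ⟨haD, hxD⟩ := h1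
    by_cases hbD : b ∈ D <;> by_cases hcD : c ∈ D
    · have hyD : y ∉ D := fun h => hpair 1 b y hb2 hy2 hbF hyF hby hbD h
      have hzD : z ∉ D := fun h => hpair 2 c z hc3 hz3 hcF hzF hcz hcD h
      refine ⟨(a, y, z), hE2.1, hE2.2, ?_⟩
      intro v hv
      rcases mem_evset.1 hv with rfl | rfl | rfl <;> assumption
    · have hyD : y ∉ D := fun h => hpair 1 b y hb2 hy2 hbF hyF hby hbD h
      refine ⟨(x, y, c), hE4.1, hE4.2, ?_⟩
      intro v hv
      rcases mem_evset.1 hv with rfl | rfl | rfl <;> assumption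
    · have hzD : z ∉ D := fun h => hpair 2 c z hc3 hz3 hcF hzF hcz hcD h
      refine ⟨(x, b, z), hE3.1, hE3.2, ?_⟩
      intro v hv
      rcases mem_evset.1 hv with rfl | rfl | rfl <;> assumption
    · refine ⟨(a, b, c), hE1.1, hE1.2, ?_⟩
      intro v hv
      rcases mem_evset.1 hv with rfl | rfl | rfl <;> assumption

end MonsterAux4
section MonsterAux5

variable {α : Type u}

/-- Main construction: from per-block edges avoiding `D` and a per-`R` system
of distinct representatives avoiding `D`, build a matching of `H - D` of size
`|𝓕| + |𝓡|`; hence deletion preserves ν. -/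
lemma construct_nu_eq (H : TriSys α) (P : FRData α) (hFR : IsFRPartition H P)
    (D : Finset α)
    (hFE : ∀ F ∈ P.Ffam, ∃ e ∈ H.edges, evset e ⊆ F ∧ ∀ v ∈ evset e, v ∉ D)
    (t : Finset α → Fin 3) (w : Finset α → α)
    (hw : ∀ R ∈ P.Rfam, w R ∈ P.W ∧ w R ∈ H.cls (t R) ∧ w R ∉ D ∧ RAdj H R (w R))
    (hinj : ∀ R ∈ P.Rfam, ∀ R' ∈ P.Rfam, R ≠ R' → t R = t R' → w R ≠ w R')
    (hdrop : ∀ R ∈ P.Rfam, ∀ d ∈ R, d ∈ D → d ∈ H.cls (t R)) :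
    (H.delete D).nu = H.nu := by
  classical
  obtain ⟨hFF, hRR, hFRd, hFW, hRW, hcover, hFano, hRstruct, hcount⟩ := hFR
  have hRW' : ∀ R ∈ P.Rfam, ∀ v ∈ R, v ∉ P.W := fun R hR v hv hvW =>
    Finset.disjoint_left.1 (hRW R hR) hv hvW
  have hFW' : ∀ F ∈ P.Ffam, ∀ v ∈ F, v ∉ P.W := fun F hF v hv hvW =>
    Finset.disjoint_left.1 (hFW F hF) hv hvW
  -- choose F-edges
  have hFEx : ∀ F : {F // F ∈ P.Ffam}, ∃ e, e ∈ H.edges ∧ evset e ⊆ F.1 ∧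
      ∀ v ∈ evset e, v ∉ D := by
    intro F
    obtain ⟨e, he, h1, h2⟩ := hFE F.1 F.2
    exact ⟨e, he, h1, h2⟩
  choose eF heF1 heF2 heF3 using hFEx
  -- choose R-edges
  have hREx : ∀ R : {R // R ∈ P.Rfam}, ∃ e, e ∈ H.edges ∧ w R.1 ∈ evset e ∧
      ∀ v ∈ evset e, v = w R.1 ∨ (v ∈ R.1 ∧ v ∉ H.cls (t R.1)) := by
    intro R
    have hwmem := hw R.1 R.2
    have hwR : w R.1 ∉ R.1 := fun h => hRW' R.1 R.2 _ h hwmem.1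
    obtain ⟨e, he, h1, h2⟩ := radj_structure H hwR hwmem.2.1 hwmem.2.2.2
    exact ⟨e, he, h1, h2⟩
  choose eR heR1 heR2 heR3 using hREx
  have DavoidR : ∀ R : {R // R ∈ P.Rfam}, ∀ v ∈ evset (eR R), v ∉ D := by
    intro R v hv hvD
    rcases heR3 R v hv with rfl | ⟨hvR, hvt⟩
    · exact (hw R.1 R.2).2.2.1 hvD
    · exact hvt (hdrop R.1 R.2 v hvR hvD)
  -- pairwise disjointness
  have hdisjFF : ∀ F F' : {F // F ∈ P.Ffam}, F.1 ≠ F'.1 →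
      Disjoint (evset (eF F)) (evset (eF F')) := by
    intro F F' hne
    rw [Finset.disjoint_left]
    intro v hv hv'
    exact Finset.disjoint_left.1 (hFF F.1 F.2 F'.1 F'.2 hne)
      (heF2 F hv) (heF2 F' hv')
  have hdisjRR : ∀ R R' : {R // R ∈ P.Rfam}, R.1 ≠ R'.1 →
      Disjoint (evset (eR R)) (evset (eR R')) := by
    intro R R' hne
    rw [Finset.disjoint_left]
    intro v hv hv'
    rcases heR3 R v hv with rfl | ⟨hvR, _⟩
    · rcases heR3 R' _ hv' with heq | ⟨hvR', _⟩
      · have hteq : t R.1 = t R'.1 :=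
          H.cls_eq_of_mem (hw R.1 R.2).2.1 (heq ▸ (hw R'.1 R'.2).2.1)
        exact hinj R.1 R.2 R'.1 R'.2 hne hteq heq
      · exact hRW' R'.1 R'.2 _ hvR' (hw R.1 R.2).1
    · rcases heR3 R' v hv' with rfl | ⟨hvR', _⟩
      · exact hRW' R.1 R.2 _ hvR (hw R'.1 R'.2).1
      · exact Finset.disjoint_left.1 (hRR R.1 R.2 R'.1 R'.2 hne) hvR hvR'
  have hdisjFR : ∀ (F : {F // F ∈ P.Ffam}) (R : {R // R ∈ P.Rfam}),
      Disjoint (evset (eF F)) (evset (eR R)) := by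
    intro F R
    rw [Finset.disjoint_left]
    intro v hv hv'
    have hvF : v ∈ F.1 := heF2 F hv
    rcases heR3 R v hv' with rfl | ⟨hvR, _⟩
    · exact hFW' F.1 F.2 _ hvF (hw R.1 R.2).1
    · exact Finset.disjoint_left.1 (hFRd F.1 F.2 R.1 R.2) hvF hvR
  set MF := P.Ffam.attach.image eF with hMF
  set MR := P.Rfam.attach.image eR with hMR
  have hmemMF : ∀ x ∈ MF, ∃ F : {F // F ∈ P.Ffam}, eF F = x := by
    intro x hx
    obtain ⟨F, _, rfl⟩ := Finset.mem_image.1 hx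
    exact ⟨F, rfl⟩
  have hmemMR : ∀ x ∈ MR, ∃ R : {R // R ∈ P.Rfam}, eR R = x := by
    intro x hx
    obtain ⟨R, _, rfl⟩ := Finset.mem_image.1 hx
    exact ⟨R, rfl⟩
  have hmatch : (H.delete D).IsMatching (MF ∪ MR) := by
    constructor
    · intro e he
      rcases Finset.mem_union.1 he with he | he
      · obtain ⟨F, rfl⟩ := hmemMF e he
        exact TriSys.mem_delete_edges.2 ⟨heF1 F, heF3 F _ (fst_mem_evset _),
          heF3 F _ (snd_mem_evset _), heF3 F _ (trd_mem_evset _)⟩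
      · obtain ⟨R, rfl⟩ := hmemMR e he
        exact TriSys.mem_delete_edges.2 ⟨heR1 R, DavoidR R _ (fst_mem_evset _),
          DavoidR R _ (snd_mem_evset _), DavoidR R _ (trd_mem_evset _)⟩
    · intro e he f hf hef
      rw [Finset.mem_coe] at he hf
      rcases Finset.mem_union.1 he with he | he <;>
        rcases Finset.mem_union.1 hf with hf | hf
      · obtain ⟨F, rfl⟩ := hmemMF e he
        obtain ⟨F', rfl⟩ := hmemMF f hf
        have : F.1 ≠ F'.1 := fun h => hef (congrArg eF (Subtype.ext h))
        exact hdisjFF F F' this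
      · obtain ⟨F, rfl⟩ := hmemMF e he
        obtain ⟨R, rfl⟩ := hmemMR f hf
        exact hdisjFR F R
      · obtain ⟨R, rfl⟩ := hmemMR e he
        obtain ⟨F, rfl⟩ := hmemMF f hf
        exact (hdisjFR F R).symm
      · obtain ⟨R, rfl⟩ := hmemMR e he
        obtain ⟨R', rfl⟩ := hmemMR f hf
        have : R.1 ≠ R'.1 := fun h => hef (congrArg eR (Subtype.ext h))
        exact hdisjRR R R' this
  have hcardMF : MF.card = P.Ffam.card := by
    rw [hMF, Finset.card_image_of_injOn, Finset.card_attach]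
    intro F _ F' _ heq
    by_contra hne
    have hne' : F.1 ≠ F'.1 := fun h => hne (Subtype.ext h)
    have := hdisjFF F F' hne'
    rw [heq, Finset.disjoint_self_iff_empty] at this
    exact absurd (this ▸ fst_mem_evset (eF F')) (Finset.notMem_empty _)
  have hcardMR : MR.card = P.Rfam.card := by
    rw [hMR, Finset.card_image_of_injOn, Finset.card_attach]
    intro R _ R' _ heq
    by_contra hne
    have hne' : R.1 ≠ R'.1 := fun h => hne (Subtype.ext h)
    have := hdisjRR R R' hne'
    rw [heq, Finset.disjoint_self_iff_empty] at this
    exact absurd (this ▸ fst_mem_evset (eR R')) (Finset.notMem_empty _)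
  have hdisjM : Disjoint MF MR := by
    rw [Finset.disjoint_left]
    intro x hxF hxR
    obtain ⟨F, rfl⟩ := hmemMF x hxF
    obtain ⟨R, hR⟩ := hmemMR _ hxR
    have hwmem : w R.1 ∈ evset (eF F) := hR ▸ heR2 R
    exact hFW' F.1 F.2 _ (heF2 F hwmem) (hw R.1 R.2).1
  have hcardM : (MF ∪ MR).card = P.Ffam.card + P.Rfam.card := by
    rw [Finset.card_union_of_disjoint hdisjM, hcardMF, hcardMR]
  refine le_antisymm (H.nu_delete_le D) ?_
  rw [← hcount, ← hcardM]
  exact TriSys.card_le_nu hmatch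

end MonsterAux5

set_option maxHeartbeats 4000000

/-- **Corollary of the monster lemma.** Under any of the four listed cases on
`a, b, c`, deleting `{a, b, c}` together with a set `S` of superfluous
vertices (at most one per class) does not change the matching number. -/
theorem monster_corollary (H : TriSys α) (P : FRData α)
    (hFR : IsFRPartition H P) (hM : IsMatchable H P)
    (a b c : α)
    (habc : ∃ i j k : Fin 3, i ≠ j ∧ i ≠ k ∧ j ≠ k ∧
      a ∈ H.cls i ∧ b ∈ H.cls j ∧ c ∈ H.cls k)
    (S : Finset α) (hSW : S ⊆ P.W)
    (hSsup : ∀ s ∈ S, SuperfluousVert H P s)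
    (hSone : ∀ i : Fin 3, (S ∩ H.cls i).card ≤ 1)
    (hcase :
      (a ∈ famUnion P.Ffam ∧ b ∈ P.W) ∨
      (∃ R ∈ P.Rfam, a ∈ R ∧ b ∉ R ∧ c ∉ famUnion P.Rfam) ∨
      (∃ R ∈ P.Rfam, a ∈ P.W ∧ EssentialForIn H P R a ∧
        ¬ EssentialForIn (H.delete S) ⟨P.Ffam, P.Rfam, P.W \ S⟩ R b ∧
        c ∉ famUnion P.Rfam) ∨
      (a ∈ P.W ∧
        ¬ EssentialVertIn (H.delete S) ⟨P.Ffam, P.Rfam, P.W \ S⟩ a ∧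
        b ∉ famUnion P.Rfam)) :
    (H.delete ({a, b, c} ∪ S)).nu = H.nu := by
  classical
  obtain ⟨i, j, k, hij, hik, hjk, hai, hbj, hck⟩ := habc
  set D := ({a, b, c} : Finset α) ∪ S with hD
  have hα : Nonempty α := ⟨a⟩
  have hFR' := hFR
  obtain ⟨hFF, hRR, hFRd, hFW, hRW, hcover, hFano, hRstruct, hcount⟩ := hFR'
  have hmemD : ∀ v : α, v ∈ D ↔ v = a ∨ v = b ∨ v = c ∨ v ∈ S := by
    intro v
    rw [hD]
    simp only [Finset.mem_union, Finset.mem_insert, Finset.mem_singleton]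
    tauto
  have hmemD' : ∀ v : α, v ∈ D ↔ a = v ∨ b = v ∨ c = v ∨ v ∈ S := by
    intro v
    rw [hmemD v]
    constructor
    · rintro (h | h | h | h)
      exacts [Or.inl h.symm, Or.inr (Or.inl h.symm),
        Or.inr (Or.inr (Or.inl h.symm)), Or.inr (Or.inr (Or.inr h))]
    · rintro (h | h | h | h)
      exacts [Or.inl h.symm, Or.inr (Or.inl h.symm),
        Or.inr (Or.inr (Or.inl h.symm)), Or.inr (Or.inr (Or.inr h))]
  have hdiff : ∀ {u v : α} {t1 t2 : Fin 3}, u ∈ H.cls t1 → v ∈ H.cls t2 →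
      ¬ t1 = t2 → u = v → False := fun h1 h2 hne heq =>
    hne (H.cls_eq_of_mem h1 (heq.symm ▸ h2))
  have hfam : ∀ (v : α) (G : Finset (Finset α)), v ∈ famUnion G ↔ ∃ A ∈ G, v ∈ A := by
    intro v G; simp [famUnion]
  have hFW2 : ∀ F ∈ P.Ffam, ∀ v ∈ F, v ∉ P.W := fun F hF v hv hvW =>
    Finset.disjoint_left.1 (hFW F hF) hv hvW
  have hRW2 : ∀ R ∈ P.Rfam, ∀ v ∈ R, v ∉ P.W := fun R hR v hv hvW =>
    Finset.disjoint_left.1 (hRW R hR) hv hvW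
  have hWR : ∀ R ∈ P.Rfam, ∀ v ∈ P.W, v ∉ R := fun R hR v hv hvR =>
    hRW2 R hR v hvR hv
  have hFR2 : ∀ F ∈ P.Ffam, ∀ R ∈ P.Rfam, ∀ v ∈ R, v ∉ F := fun F hF R hR v hv hvF =>
    Finset.disjoint_left.1 (hFRd F hF R hR) hvF hv
  have hRuniq : ∀ R ∈ P.Rfam, ∀ R' ∈ P.Rfam, ∀ v, v ∈ R → v ∈ R' → R = R' := by
    intro R hR R' hR' v hv hv'
    by_contra hne
    exact Finset.disjoint_left.1 (hRR R hR R' hR' hne) hv hv'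
  -- saturating matchings avoiding S, in every class
  have hsatS : ∀ tt : Fin 3, SaturatingR H P.Rfam ((P.W ∩ H.cls tt) \ S) := by
    intro tt
    have hWi : (P.W ∩ H.cls tt) \ S = (P.W ∩ H.cls tt) \ (S ∩ H.cls tt) := by
      ext v
      simp only [Finset.mem_sdiff, Finset.mem_inter]
      tauto
    rw [hWi]
    rcases Finset.eq_empty_or_nonempty (S ∩ H.cls tt) with hS | ⟨s, hs⟩
    · rw [hS, Finset.sdiff_empty]
      exact hM tt
    · have hcard : (S ∩ H.cls tt).card = 1 :=
        le_antisymm (hSone tt) (Finset.card_pos.2 ⟨s, hs⟩)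
      obtain ⟨s', hs'⟩ := Finset.card_eq_one.1 hcard
      rw [hs']
      have hsmem : s' ∈ S ∩ H.cls tt := hs' ▸ Finset.mem_singleton_self s'
      obtain ⟨hsS, hscls⟩ := Finset.mem_inter.1 hsmem
      obtain ⟨t', hsup⟩ := hSsup s' hsS
      have ht' : t' = tt :=
        H.cls_eq_of_mem (Finset.mem_inter.1 hsup.1).2 hscls
      subst ht'
      exact sat_avoid_superfluous hα (hM t') hsup.2
  -- conversion between neighborhoods in H and in H - S
  have hrnb : ∀ (tt : Fin 3) (U : Finset (Finset α)), U ⊆ P.Rfam →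
      RNbhd (H.delete S) ((P.W \ S) ∩ (H.delete S).cls tt) U
        = RNbhd H ((P.W ∩ H.cls tt) \ S) U := by
    intro tt U hU
    have hWsd : (P.W \ S) ∩ (H.delete S).cls tt = (P.W ∩ H.cls tt) \ S := by
      rw [TriSys.delete_cls]
      ext v
      simp only [Finset.mem_inter, Finset.mem_sdiff]
      tauto
    rw [hWsd]
    apply rnbhd_delete
    · intro v hv; exact (Finset.mem_sdiff.1 hv).2
    · intro R hR v hv hvS; exact hRW2 R (hU hR) v hv (hSW hvS)
    · intro R hR v hv
      exact hWR R (hU hR) v (Finset.mem_inter.1 (Finset.mem_sdiff.1 hv).1).1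
  rcases hcase with ⟨haF, hbW⟩ | ⟨R0, hR0, haR0, hbR0, hcR⟩ |
    ⟨R0, hR0, haW, ⟨t0, hEssA⟩, hbNE, hcR⟩ | ⟨haW, hNE, hbV⟩
  · -- CASE 1 : a ∈ V(𝓕), b ∈ W
    obtain ⟨Fa, hFa, haFa⟩ := (hfam a _).1 haF
    have hFE : ∀ F ∈ P.Ffam, ∃ e ∈ H.edges, evset e ⊆ F ∧ ∀ v ∈ evset e, v ∉ D := by
      intro F hF
      apply fano_edge_avoid H F D (hFano F hF) a c i k hik hai hck
      intro v hvF hvD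
      rcases (hmemD' v).1 hvD with rfl | rfl | rfl | hvS
      · exact Or.inl rfl
      · exact absurd hbW (hFW2 F hF _ hvF)
      · exact Or.inr rfl
      · exact absurd (hSW hvS) (hFW2 F hF _ hvF)
    by_cases hcR : c ∈ famUnion P.Rfam
    · obtain ⟨Rc, hRc, hcRc⟩ := (hfam c _).1 hcR
      obtain ⟨f, hfinj, hf⟩ := hsatS i
      obtain ⟨g, hginj, hg⟩ := hsatS k
      apply construct_nu_eq H P hFR D hFE
        (fun R => if R = Rc then k else i) (fun R => if R = Rc then g R else f R)
      · intro R hR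
        by_cases h : R = Rc
        · simp only [if_pos h]
          subst h
          obtain ⟨hgm, hgadj⟩ := hg R hR
          obtain ⟨hgW, hgS⟩ := Finset.mem_sdiff.1 hgm
          obtain ⟨hgW1, hgk⟩ := Finset.mem_inter.1 hgW
          refine ⟨hgW1, hgk, ?_, hgadj⟩
          intro hDm
          rcases (hmemD _).1 hDm with h | h | h | h
          · exact hFW2 Fa hFa a haFa (h ▸ hgW1)
          · exact hdiff hbj hgk hjk h.symm
          · exact hRW2 R hR c hcRc (h ▸ hgW1)
          · exact hgS h
        · simp only [if_neg h]
          obtain ⟨hfm, hfadj⟩ := hf R hR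
          obtain ⟨hfW, hfS⟩ := Finset.mem_sdiff.1 hfm
          obtain ⟨hfW1, hfi⟩ := Finset.mem_inter.1 hfW
          refine ⟨hfW1, hfi, ?_, hfadj⟩
          intro hDm
          rcases (hmemD _).1 hDm with h' | h' | h' | h'
          · exact hFW2 Fa hFa a haFa (h' ▸ hfW1)
          · exact hdiff hbj hfi (Ne.symm hij) h'.symm
          · exact hdiff hck hfi (Ne.symm hik) h'.symm
          · exact hfS h'
      · intro R hR R' hR' hne hteq
        by_cases h1 : R = Rc <;> by_cases h2 : R' = Rc
        · exact absurd (h1.trans h2.symm) hne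
        · simp only [if_pos h1, if_neg h2] at hteq
          exact absurd hteq.symm hik
        · simp only [if_neg h1, if_pos h2] at hteq
          exact absurd hteq hik
        · simp only [if_neg h1, if_neg h2]
          exact fun heq => hne (hfinj (Finset.mem_coe.2 hR) (Finset.mem_coe.2 hR') heq)
      · intro R hR d hd hdD
        rcases (hmemD' d).1 hdD with rfl | rfl | rfl | h
        · exact absurd haFa (hFR2 Fa hFa R hR a hd)
        · exact absurd hbW (hRW2 R hR b hd)
        · have hRRc : R = Rc := hRuniq R hR Rc hRc c hd hcRc
          simp only [if_pos hRRc]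
          exact hck
        · exact absurd (hSW h) (hRW2 R hR d hd)
    · obtain ⟨f, hfinj, hf⟩ := hsatS i
      apply construct_nu_eq H P hFR D hFE (fun _ => i) (fun R => f R)
      · intro R hR
        obtain ⟨hfm, hfadj⟩ := hf R hR
        obtain ⟨hfW, hfS⟩ := Finset.mem_sdiff.1 hfm
        obtain ⟨hfW1, hfi⟩ := Finset.mem_inter.1 hfW
        refine ⟨hfW1, hfi, ?_, hfadj⟩
        intro hDm
        rcases (hmemD _).1 hDm with h' | h' | h' | h'
        · exact hFW2 Fa hFa a haFa (h' ▸ hfW1)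
        · exact hdiff hbj hfi (Ne.symm hij) h'.symm
        · exact hdiff hck hfi (Ne.symm hik) h'.symm
        · exact hfS h'
      · intro R hR R' hR' hne _
        exact fun heq => hne (hfinj (Finset.mem_coe.2 hR) (Finset.mem_coe.2 hR') heq)
      · intro R hR d hd hdD
        rcases (hmemD' d).1 hdD with rfl | rfl | rfl | h
        · exact absurd haFa (hFR2 Fa hFa R hR a hd)
        · exact absurd hbW (hRW2 R hR b hd)
        · exact absurd ((hfam c _).2 ⟨R, hR, hd⟩) hcR
        · exact absurd (hSW h) (hRW2 R hR d hd)
  · -- CASE 2 : a ∈ R0 ∈ 𝓡, b ∉ R0, c ∉ V(𝓡)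
    have hFE : ∀ F ∈ P.Ffam, ∃ e ∈ H.edges, evset e ⊆ F ∧ ∀ v ∈ evset e, v ∉ D := by
      intro F hF
      apply fano_edge_avoid H F D (hFano F hF) b c j k hjk hbj hck
      intro v hvF hvD
      rcases (hmemD' v).1 hvD with rfl | rfl | rfl | hvS
      · exact absurd hvF (hFR2 F hF R0 hR0 a haR0)
      · exact Or.inl rfl
      · exact Or.inr rfl
      · exact absurd (hSW hvS) (hFW2 F hF _ hvF)
    by_cases hbV : b ∈ famUnion P.Rfam
    · obtain ⟨R1, hR1, hbR1⟩ := (hfam b _).1 hbV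
      have hR10 : R1 ≠ R0 := fun h => hbR0 (h ▸ hbR1)
      obtain ⟨f, hfinj, hf⟩ := hsatS i
      obtain ⟨g, hginj, hg⟩ := hsatS j
      apply construct_nu_eq H P hFR D hFE
        (fun R => if R = R1 then j else i) (fun R => if R = R1 then g R else f R)
      · intro R hR
        by_cases h : R = R1
        · simp only [if_pos h]
          subst h
          obtain ⟨hgm, hgadj⟩ := hg R hR
          obtain ⟨hgW, hgS⟩ := Finset.mem_sdiff.1 hgm
          obtain ⟨hgW1, hgj⟩ := Finset.mem_inter.1 hgW
          refine ⟨hgW1, hgj, ?_, hgadj⟩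
          intro hDm
          rcases (hmemD _).1 hDm with h | h | h | h
          · exact hRW2 R0 hR0 a haR0 (h ▸ hgW1)
          · exact hRW2 R hR b hbR1 (h ▸ hgW1)
          · exact hdiff hck hgj (Ne.symm hjk) h.symm
          · exact hgS h
        · simp only [if_neg h]
          obtain ⟨hfm, hfadj⟩ := hf R hR
          obtain ⟨hfW, hfS⟩ := Finset.mem_sdiff.1 hfm
          obtain ⟨hfW1, hfi⟩ := Finset.mem_inter.1 hfW
          refine ⟨hfW1, hfi, ?_, hfadj⟩
          intro hDm
          rcases (hmemD _).1 hDm with h' | h' | h' | h'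
          · exact hRW2 R0 hR0 a haR0 (h' ▸ hfW1)
          · exact hdiff hbj hfi (Ne.symm hij) h'.symm
          · exact hdiff hck hfi (Ne.symm hik) h'.symm
          · exact hfS h'
      · intro R hR R' hR' hne hteq
        by_cases h1 : R = R1 <;> by_cases h2 : R' = R1
        · exact absurd (h1.trans h2.symm) hne
        · simp only [if_pos h1, if_neg h2] at hteq
          exact absurd hteq.symm hij
        · simp only [if_neg h1, if_pos h2] at hteq
          exact absurd hteq hij
        · simp only [if_neg h1, if_neg h2]
          exact fun heq => hne (hfinj (Finset.mem_coe.2 hR) (Finset.mem_coe.2 hR') heq)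
      · intro R hR d hd hdD
        rcases (hmemD' d).1 hdD with rfl | rfl | rfl | h
        · have hRR0 : R = R0 := hRuniq R hR R0 hR0 a hd haR0
          have hne1 : R ≠ R1 := fun hh => hR10 (hh ▸ hRR0)
          simp only [if_neg hne1]
          exact hai
        · have hRR1 : R = R1 := hRuniq R hR R1 hR1 b hd hbR1
          simp only [if_pos hRR1]
          exact hbj
        · exact absurd ((hfam c _).2 ⟨R, hR, hd⟩) hcR
        · exact absurd (hSW h) (hRW2 R hR d hd)
    · obtain ⟨f, hfinj, hf⟩ := hsatS i
      apply construct_nu_eq H P hFR D hFE (fun _ => i) (fun R => f R)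
      · intro R hR
        obtain ⟨hfm, hfadj⟩ := hf R hR
        obtain ⟨hfW, hfS⟩ := Finset.mem_sdiff.1 hfm
        obtain ⟨hfW1, hfi⟩ := Finset.mem_inter.1 hfW
        refine ⟨hfW1, hfi, ?_, hfadj⟩
        intro hDm
        rcases (hmemD _).1 hDm with h' | h' | h' | h'
        · exact hRW2 R0 hR0 a haR0 (h' ▸ hfW1)
        · exact hdiff hbj hfi (Ne.symm hij) h'.symm
        · exact hdiff hck hfi (Ne.symm hik) h'.symm
        · exact hfS h'
      · intro R hR R' hR' hne _
        exact fun heq => hne (hfinj (Finset.mem_coe.2 hR) (Finset.mem_coe.2 hR') heq)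
      · intro R hR d hd hdD
        rcases (hmemD' d).1 hdD with rfl | rfl | rfl | h
        · exact hai
        · exact absurd ((hfam b _).2 ⟨R, hR, hd⟩) hbV
        · exact absurd ((hfam c _).2 ⟨R, hR, hd⟩) hcR
        · exact absurd (hSW h) (hRW2 R hR d hd)
  · -- CASE 3 : a essential for R0, b not essential for R0 in H - S, c ∉ V(𝓡)
    have hFE : ∀ F ∈ P.Ffam, ∃ e ∈ H.edges, evset e ⊆ F ∧ ∀ v ∈ evset e, v ∉ D := by
      intro F hF
      apply fano_edge_avoid H F D (hFano F hF) b c j k hjk hbj hck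
      intro v hvF hvD
      rcases (hmemD' v).1 hvD with rfl | rfl | rfl | hvS
      · exact absurd haW (hFW2 F hF _ hvF)
      · exact Or.inl rfl
      · exact Or.inr rfl
      · exact absurd (hSW hvS) (hFW2 F hF _ hvF)
    -- the class of a is i
    have haRN : a ∈ RNbhd H (P.W ∩ H.cls t0) {R0} := hEssA ▸ Finset.mem_singleton_self a
    have hat0 : a ∈ H.cls t0 := (Finset.mem_inter.1 (mem_rnbhd.1 haRN).1).2
    have ht0 : t0 = i := H.cls_eq_of_mem hat0 hai
    rw [ht0] at hEssA
    obtain ⟨f, hfinj, hf⟩ := hsatS i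
    have hfR0 : f R0 = a := by
      have h1 : f R0 ∈ RNbhd H ((P.W ∩ H.cls i) \ S) {R0} :=
        mem_rnbhd_singleton.2 ⟨(hf R0 hR0).1, (hf R0 hR0).2⟩
      rw [rnbhd_sdiff, hEssA] at h1
      exact Finset.mem_singleton.1 (Finset.mem_sdiff.1 h1).1
    have hbNE' : ∀ tt : Fin 3, RNbhd H ((P.W ∩ H.cls tt) \ S) {R0} ≠ {b} := by
      intro tt heq
      apply hbNE
      refine ⟨tt, ?_⟩
      show RNbhd (H.delete S) ((P.W \ S) ∩ (H.delete S).cls tt) {R0} = {b}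
      rw [hrnb tt {R0} (Finset.singleton_subset_iff.2 hR0)]
      exact heq
    by_cases hbV : b ∈ famUnion P.Rfam
    · obtain ⟨R1, hR1, hbR1⟩ := (hfam b _).1 hbV
      obtain ⟨g, hginj, hg⟩ := hsatS j
      apply construct_nu_eq H P hFR D hFE
        (fun R => if R = R0 ∨ R = R1 then j else i)
        (fun R => if R = R0 ∨ R = R1 then g R else f R)
      · intro R hR
        by_cases h : R = R0 ∨ R = R1
        · simp only [if_pos h]
          obtain ⟨hgm, hgadj⟩ := hg R hR
          obtain ⟨hgW, hgS⟩ := Finset.mem_sdiff.1 hgm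
          obtain ⟨hgW1, hgj⟩ := Finset.mem_inter.1 hgW
          refine ⟨hgW1, hgj, ?_, hgadj⟩
          intro hDm
          rcases (hmemD _).1 hDm with h' | h' | h' | h'
          · exact hdiff hai hgj hij h'.symm
          · exact hRW2 R1 hR1 b hbR1 (h' ▸ hgW1)
          · exact hdiff hck hgj (Ne.symm hjk) h'.symm
          · exact hgS h'
        · simp only [if_neg h]
          push_neg at h
          obtain ⟨hfm, hfadj⟩ := hf R hR
          obtain ⟨hfW, hfS⟩ := Finset.mem_sdiff.1 hfm
          obtain ⟨hfW1, hfi⟩ := Finset.mem_inter.1 hfW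
          refine ⟨hfW1, hfi, ?_, hfadj⟩
          intro hDm
          rcases (hmemD _).1 hDm with h' | h' | h' | h'
          · exact h.1 (hfinj (Finset.mem_coe.2 hR) (Finset.mem_coe.2 hR0)
              (h'.trans hfR0.symm))
          · exact hdiff hbj hfi (Ne.symm hij) h'.symm
          · exact hdiff hck hfi (Ne.symm hik) h'.symm
          · exact hfS h'
      · intro R hR R' hR' hne hteq
        by_cases h1 : R = R0 ∨ R = R1 <;> by_cases h2 : R' = R0 ∨ R' = R1
        · simp only [if_pos h1, if_pos h2]
          exact fun heq => hne (hginj (Finset.mem_coe.2 hR) (Finset.mem_coe.2 hR') heq)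
        · simp only [if_pos h1, if_neg h2] at hteq
          exact absurd hteq.symm hij
        · simp only [if_neg h1, if_pos h2] at hteq
          exact absurd hteq hij
        · simp only [if_neg h1, if_neg h2]
          exact fun heq => hne (hfinj (Finset.mem_coe.2 hR) (Finset.mem_coe.2 hR') heq)
      · intro R hR d hd hdD
        rcases (hmemD' d).1 hdD with rfl | rfl | rfl | h
        · exact absurd haW (hRW2 R hR a hd)
        · have hRR1 : R = R1 := hRuniq R hR R1 hR1 b hd hbR1
          simp only [if_pos (Or.inr hRR1)]
          exact hbj
        · exact absurd ((hfam c _).2 ⟨R, hR, hd⟩) hcR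
        · exact absurd (hSW h) (hRW2 R hR d hd)
    · -- b ∉ V(𝓡): reroute R0 to class j using non-essentiality of b
      have hNne : (RNbhd H ((P.W ∩ H.cls j) \ S) {R0}).Nonempty :=
        rnbhd_nonempty (hsatS j) hR0
      obtain ⟨w0, hw0N, hw0b⟩ :
          ∃ w0 ∈ RNbhd H ((P.W ∩ H.cls j) \ S) {R0}, w0 ≠ b := by
        by_contra hno
        push_neg at hno
        have hsub : RNbhd H ((P.W ∩ H.cls j) \ S) {R0} ⊆ {b} := fun x hx =>
          Finset.mem_singleton.2 (hno x hx)
        rcases Finset.subset_singleton_iff.1 hsub with h | h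
        · rw [h] at hNne; exact Finset.not_nonempty_empty hNne
        · exact hbNE' j h
      obtain ⟨hw0m, hw0adj⟩ := mem_rnbhd_singleton.1 hw0N
      obtain ⟨hw0W, hw0S⟩ := Finset.mem_sdiff.1 hw0m
      obtain ⟨hw0W1, hw0j⟩ := Finset.mem_inter.1 hw0W
      apply construct_nu_eq H P hFR D hFE
        (fun R => if R = R0 then j else i) (fun R => if R = R0 then w0 else f R)
      · intro R hR
        by_cases h : R = R0
        · simp only [if_pos h]
          subst h
          refine ⟨hw0W1, hw0j, ?_, hw0adj⟩
          intro hDm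
          rcases (hmemD _).1 hDm with h' | h' | h' | h'
          · exact hdiff hai hw0j hij h'.symm
          · exact hw0b h'
          · exact hdiff hck hw0j (Ne.symm hjk) h'.symm
          · exact hw0S h'
        · simp only [if_neg h]
          obtain ⟨hfm, hfadj⟩ := hf R hR
          obtain ⟨hfW, hfS⟩ := Finset.mem_sdiff.1 hfm
          obtain ⟨hfW1, hfi⟩ := Finset.mem_inter.1 hfW
          refine ⟨hfW1, hfi, ?_, hfadj⟩
          intro hDm
          rcases (hmemD _).1 hDm with h' | h' | h' | h'
          · exact h (hfinj (Finset.mem_coe.2 hR) (Finset.mem_coe.2 hR0)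
              (h'.trans hfR0.symm))
          · exact hdiff hbj hfi (Ne.symm hij) h'.symm
          · exact hdiff hck hfi (Ne.symm hik) h'.symm
          · exact hfS h'
      · intro R hR R' hR' hne hteq
        by_cases h1 : R = R0 <;> by_cases h2 : R' = R0
        · exact absurd (h1.trans h2.symm) hne
        · simp only [if_pos h1, if_neg h2] at hteq
          exact absurd hteq.symm hij
        · simp only [if_neg h1, if_pos h2] at hteq
          exact absurd hteq hij
        · simp only [if_neg h1, if_neg h2]
          exact fun heq => hne (hfinj (Finset.mem_coe.2 hR) (Finset.mem_coe.2 hR') heq)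
      · intro R hR d hd hdD
        rcases (hmemD' d).1 hdD with rfl | rfl | rfl | h
        · exact absurd haW (hRW2 R hR a hd)
        · exact absurd ((hfam b _).2 ⟨R, hR, hd⟩) hbV
        · exact absurd ((hfam c _).2 ⟨R, hR, hd⟩) hcR
        · exact absurd (hSW h) (hRW2 R hR d hd)
  · -- CASE 4 : a not essential in H - S, b ∉ V(𝓡)
    have hFE : ∀ F ∈ P.Ffam, ∃ e ∈ H.edges, evset e ⊆ F ∧ ∀ v ∈ evset e, v ∉ D := by
      intro F hF
      apply fano_edge_avoid H F D (hFano F hF) b c j k hjk hbj hck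
      intro v hvF hvD
      rcases (hmemD' v).1 hvD with rfl | rfl | rfl | hvS
      · exact absurd haW (hFW2 F hF _ hvF)
      · exact Or.inl rfl
      · exact Or.inr rfl
      · exact absurd (hSW hvS) (hFW2 F hF _ hvF)
    have ha' : ∀ U ⊆ P.Rfam, U.card = 1 →
        RNbhd H ((P.W ∩ H.cls i) \ S) U ≠ {a} := by
      intro U hU hc heq
      apply hNE
      refine ⟨i, U, hU, by rw [Finset.card_singleton]; exact hc, ?_⟩
      show RNbhd (H.delete S) ((P.W \ S) ∩ (H.delete S).cls i) U = {a}
      rw [hrnb i U hU]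
      exact heq
    -- uniform checker for class-i vertices avoiding a
    have hchecki : ∀ (f : Finset α → α), (∀ R ∈ P.Rfam,
          f R ∈ ((P.W ∩ H.cls i) \ S) \ {a} ∧ RAdj H R (f R)) →
        ∀ R ∈ P.Rfam, f R ∈ P.W ∧ f R ∈ H.cls i ∧ f R ∉ D ∧ RAdj H R (f R) := by
      intro f hf R hR
      obtain ⟨hfm, hfadj⟩ := hf R hR
      obtain ⟨hfm1, hfa⟩ := Finset.mem_sdiff.1 hfm
      obtain ⟨hfW, hfS⟩ := Finset.mem_sdiff.1 hfm1
      obtain ⟨hfW1, hfi⟩ := Finset.mem_inter.1 hfW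
      refine ⟨hfW1, hfi, ?_, hfadj⟩
      intro hDm
      rcases (hmemD _).1 hDm with h' | h' | h' | h'
      · exact hfa (Finset.mem_singleton.2 h')
      · exact hdiff hbj hfi (Ne.symm hij) h'.symm
      · exact hdiff hck hfi (Ne.symm hik) h'.symm
      · exact hfS h'
    rcases avoid_nonessential hα (hsatS i) ha' with hL | ⟨U, hUsub, hU2, hAll⟩
    · -- a can be avoided outright in class i
      obtain ⟨f, hfinj, hf⟩ := hL
      by_cases hcV : c ∈ famUnion P.Rfam
      · obtain ⟨Rc, hRc, hcRc⟩ := (hfam c _).1 hcV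
        obtain ⟨g, hginj, hg⟩ := hsatS k
        apply construct_nu_eq H P hFR D hFE
          (fun R => if R = Rc then k else i) (fun R => if R = Rc then g R else f R)
        · intro R hR
          by_cases h : R = Rc
          · simp only [if_pos h]
            subst h
            obtain ⟨hgm, hgadj⟩ := hg R hR
            obtain ⟨hgW, hgS⟩ := Finset.mem_sdiff.1 hgm
            obtain ⟨hgW1, hgk⟩ := Finset.mem_inter.1 hgW
            refine ⟨hgW1, hgk, ?_, hgadj⟩
            intro hDm
            rcases (hmemD _).1 hDm with h' | h' | h' | h'
            · exact hdiff hai hgk hik h'.symm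
            · exact hdiff hbj hgk hjk h'.symm
            · exact hRW2 R hR c hcRc (h' ▸ hgW1)
            · exact hgS h'
          · simp only [if_neg h]
            exact hchecki f hf R hR
        · intro R hR R' hR' hne hteq
          by_cases h1 : R = Rc <;> by_cases h2 : R' = Rc
          · exact absurd (h1.trans h2.symm) hne
          · simp only [if_pos h1, if_neg h2] at hteq
            exact absurd hteq.symm hik
          · simp only [if_neg h1, if_pos h2] at hteq
            exact absurd hteq hik
          · simp only [if_neg h1, if_neg h2]
            exact fun heq => hne (hfinj (Finset.mem_coe.2 hR) (Finset.mem_coe.2 hR') heq)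
        · intro R hR d hd hdD
          rcases (hmemD' d).1 hdD with rfl | rfl | rfl | h
          · exact absurd haW (hRW2 R hR a hd)
          · exact absurd ((hfam b _).2 ⟨R, hR, hd⟩) hbV
          · have hRRc : R = Rc := hRuniq R hR Rc hRc c hd hcRc
            simp only [if_pos hRRc]
            exact hck
          · exact absurd (hSW h) (hRW2 R hR d hd)
      · apply construct_nu_eq H P hFR D hFE (fun _ => i) (fun R => f R)
        · exact hchecki f hf
        · intro R hR R' hR' hne _
          exact fun heq => hne (hfinj (Finset.mem_coe.2 hR) (Finset.mem_coe.2 hR') heq)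
        · intro R hR d hd hdD
          rcases (hmemD' d).1 hdD with rfl | rfl | rfl | h
          · exact absurd haW (hRW2 R hR a hd)
          · exact absurd ((hfam b _).2 ⟨R, hR, hd⟩) hbV
          · exact absurd ((hfam c _).2 ⟨R, hR, hd⟩) hcV
          · exact absurd (hSW h) (hRW2 R hR d hd)
    · -- tight-set branch: one member of U must be rerouted
      by_cases hcV : c ∈ famUnion P.Rfam
      · obtain ⟨Rc, hRc, hcRc⟩ := (hfam c _).1 hcV
        -- pick R' ∈ U different from Rc
        obtain ⟨x, hx, y, hy, hxy⟩ := Finset.one_lt_card.1 hU2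
        obtain ⟨R', hR'U, hR'Rc⟩ : ∃ R' ∈ U, R' ≠ Rc := by
          rcases eq_or_ne x Rc with rfl | hxRc
          · exact ⟨y, hy, fun h => hxy h.symm⟩
          · exact ⟨x, hx, hxRc⟩
        have hR'f : R' ∈ P.Rfam := hUsub hR'U
        obtain ⟨f, hfinj, hf⟩ := hAll R' hR'U
        obtain ⟨g, hginj, hg⟩ := hsatS k
        apply construct_nu_eq H P hFR D hFE
          (fun R => if R = R' ∨ R = Rc then k else i)
          (fun R => if R = R' ∨ R = Rc then g R else f R)
        · intro R hR
          by_cases h : R = R' ∨ R = Rc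
          · simp only [if_pos h]
            obtain ⟨hgm, hgadj⟩ := hg R hR
            obtain ⟨hgW, hgS⟩ := Finset.mem_sdiff.1 hgm
            obtain ⟨hgW1, hgk⟩ := Finset.mem_inter.1 hgW
            refine ⟨hgW1, hgk, ?_, hgadj⟩
            intro hDm
            rcases (hmemD _).1 hDm with h' | h' | h' | h'
            · exact hdiff hai hgk hik h'.symm
            · exact hdiff hbj hgk hjk h'.symm
            · exact hRW2 Rc hRc c hcRc (h' ▸ hgW1)
            · exact hgS h'
          · simp only [if_neg h]
            push_neg at h
            have hRer : R ∈ P.Rfam.erase R' := Finset.mem_erase.2 ⟨h.1, hR⟩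
            obtain ⟨hfm, hfadj⟩ := hf R hRer
            obtain ⟨hfm1, hfa⟩ := Finset.mem_sdiff.1 hfm
            obtain ⟨hfW, hfS⟩ := Finset.mem_sdiff.1 hfm1
            obtain ⟨hfW1, hfi⟩ := Finset.mem_inter.1 hfW
            refine ⟨hfW1, hfi, ?_, hfadj⟩
            intro hDm
            rcases (hmemD _).1 hDm with h' | h' | h' | h'
            · exact hfa (Finset.mem_singleton.2 h')
            · exact hdiff hbj hfi (Ne.symm hij) h'.symm
            · exact hdiff hck hfi (Ne.symm hik) h'.symm
            · exact hfS h'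
        · intro Rx hRx Ry hRy hne hteq
          by_cases h1 : Rx = R' ∨ Rx = Rc <;> by_cases h2 : Ry = R' ∨ Ry = Rc
          · simp only [if_pos h1, if_pos h2]
            exact fun heq => hne (hginj (Finset.mem_coe.2 hRx) (Finset.mem_coe.2 hRy) heq)
          · simp only [if_pos h1, if_neg h2] at hteq
            exact absurd hteq.symm hik
          · simp only [if_neg h1, if_pos h2] at hteq
            exact absurd hteq hik
          · simp only [if_neg h1, if_neg h2]
            push_neg at h1 h2
            have hRa : Rx ∈ P.Rfam.erase R' := Finset.mem_erase.2 ⟨h1.1, hRx⟩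
            have hRb : Ry ∈ P.Rfam.erase R' := Finset.mem_erase.2 ⟨h2.1, hRy⟩
            exact fun heq => hne (hfinj (Finset.mem_coe.2 hRa) (Finset.mem_coe.2 hRb) heq)
        · intro R hR d hd hdD
          rcases (hmemD' d).1 hdD with rfl | rfl | rfl | h
          · exact absurd haW (hRW2 R hR a hd)
          · exact absurd ((hfam b _).2 ⟨R, hR, hd⟩) hbV
          · have hRRc : R = Rc := hRuniq R hR Rc hRc c hd hcRc
            simp only [if_pos (Or.inr hRRc)]
            exact hck
          · exact absurd (hSW h) (hRW2 R hR d hd)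
      · -- c ∉ V(𝓡): find a member of U reroutable to class j or k
        obtain ⟨R', hR'U, hside⟩ : ∃ R' ∈ U,
            (RNbhd H (((P.W ∩ H.cls j) \ S) \ {b}) {R'}).Nonempty ∨
            (RNbhd H (((P.W ∩ H.cls k) \ S) \ {c}) {R'}).Nonempty := by
          by_contra hno
          push_neg at hno
          obtain ⟨x, hx, y, hy, hxy⟩ := Finset.one_lt_card.1 hU2
          have hex : ∀ R' ∈ U, RNbhd H (((P.W ∩ H.cls j) \ S) \ {b}) {R'} = ∅ := by
            intro R' h
            have := (hno R' h).1
            exact this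
          exact stuck_unique (hsatS j) (hUsub hx) (hUsub hy) hxy (hex x hx) (hex y hy)
        have hR'f : R' ∈ P.Rfam := hUsub hR'U
        obtain ⟨f, hfinj, hf⟩ := hAll R' hR'U
        rcases hside with ⟨w0, hw0⟩ | ⟨w0, hw0⟩
        · -- reroute R' to class j
          obtain ⟨hw0m, hw0adj⟩ := mem_rnbhd_singleton.1 hw0
          obtain ⟨hw0m1, hw0b⟩ := Finset.mem_sdiff.1 hw0m
          obtain ⟨hw0W, hw0S⟩ := Finset.mem_sdiff.1 hw0m1
          obtain ⟨hw0W1, hw0j⟩ := Finset.mem_inter.1 hw0W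
          rw [Finset.mem_singleton] at hw0b
          apply construct_nu_eq H P hFR D hFE
            (fun R => if R = R' then j else i) (fun R => if R = R' then w0 else f R)
          · intro R hR
            by_cases h : R = R'
            · simp only [if_pos h]
              subst h
              refine ⟨hw0W1, hw0j, ?_, hw0adj⟩
              intro hDm
              rcases (hmemD _).1 hDm with h' | h' | h' | h'
              · exact hdiff hai hw0j hij h'.symm
              · exact hw0b h'
              · exact hdiff hck hw0j (Ne.symm hjk) h'.symm
              · exact hw0S h'
            · simp only [if_neg h]
              have hRer : R ∈ P.Rfam.erase R' := Finset.mem_erase.2 ⟨h, hR⟩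
              obtain ⟨hfm, hfadj⟩ := hf R hRer
              obtain ⟨hfm1, hfa⟩ := Finset.mem_sdiff.1 hfm
              obtain ⟨hfW, hfS⟩ := Finset.mem_sdiff.1 hfm1
              obtain ⟨hfW1, hfi⟩ := Finset.mem_inter.1 hfW
              refine ⟨hfW1, hfi, ?_, hfadj⟩
              intro hDm
              rcases (hmemD _).1 hDm with h' | h' | h' | h'
              · exact hfa (Finset.mem_singleton.2 h')
              · exact hdiff hbj hfi (Ne.symm hij) h'.symm
              · exact hdiff hck hfi (Ne.symm hik) h'.symm
              · exact hfS h'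
          · intro R hR Rx hRx hne hteq
            by_cases h1 : R = R' <;> by_cases h2 : Rx = R'
            · exact absurd (h1.trans h2.symm) hne
            · simp only [if_pos h1, if_neg h2] at hteq
              exact absurd hteq.symm hij
            · simp only [if_neg h1, if_pos h2] at hteq
              exact absurd hteq hij
            · simp only [if_neg h1, if_neg h2]
              have hRa : R ∈ P.Rfam.erase R' := Finset.mem_erase.2 ⟨h1, hR⟩
              have hRb : Rx ∈ P.Rfam.erase R' := Finset.mem_erase.2 ⟨h2, hRx⟩
              exact fun heq => hne (hfinj (Finset.mem_coe.2 hRa) (Finset.mem_coe.2 hRb) heq)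
          · intro R hR d hd hdD
            rcases (hmemD' d).1 hdD with rfl | rfl | rfl | h
            · exact absurd haW (hRW2 R hR a hd)
            · exact absurd ((hfam b _).2 ⟨R, hR, hd⟩) hbV
            · exact absurd ((hfam c _).2 ⟨R, hR, hd⟩) hcV
            · exact absurd (hSW h) (hRW2 R hR d hd)
        · -- reroute R' to class k
          obtain ⟨hw0m, hw0adj⟩ := mem_rnbhd_singleton.1 hw0
          obtain ⟨hw0m1, hw0c⟩ := Finset.mem_sdiff.1 hw0m
          obtain ⟨hw0W, hw0S⟩ := Finset.mem_sdiff.1 hw0m1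
          obtain ⟨hw0W1, hw0k⟩ := Finset.mem_inter.1 hw0W
          rw [Finset.mem_singleton] at hw0c
          apply construct_nu_eq H P hFR D hFE
            (fun R => if R = R' then k else i) (fun R => if R = R' then w0 else f R)
          · intro R hR
            by_cases h : R = R'
            · simp only [if_pos h]
              subst h
              refine ⟨hw0W1, hw0k, ?_, hw0adj⟩
              intro hDm
              rcases (hmemD _).1 hDm with h' | h' | h' | h'
              · exact hdiff hai hw0k hik h'.symm
              · exact hdiff hbj hw0k hjk h'.symm
              · exact hw0c h'
              · exact hw0S h'
            · simp only [if_neg h]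
              have hRer : R ∈ P.Rfam.erase R' := Finset.mem_erase.2 ⟨h, hR⟩
              obtain ⟨hfm, hfadj⟩ := hf R hRer
              obtain ⟨hfm1, hfa⟩ := Finset.mem_sdiff.1 hfm
              obtain ⟨hfW, hfS⟩ := Finset.mem_sdiff.1 hfm1
              obtain ⟨hfW1, hfi⟩ := Finset.mem_inter.1 hfW
              refine ⟨hfW1, hfi, ?_, hfadj⟩
              intro hDm
              rcases (hmemD _).1 hDm with h' | h' | h' | h'
              · exact hfa (Finset.mem_singleton.2 h')
              · exact hdiff hbj hfi (Ne.symm hij) h'.symm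
              · exact hdiff hck hfi (Ne.symm hik) h'.symm
              · exact hfS h'
          · intro R hR Rx hRx hne hteq
            by_cases h1 : R = R' <;> by_cases h2 : Rx = R'
            · exact absurd (h1.trans h2.symm) hne
            · simp only [if_pos h1, if_neg h2] at hteq
              exact absurd hteq.symm hik
            · simp only [if_neg h1, if_pos h2] at hteq
              exact absurd hteq hik
            · simp only [if_neg h1, if_neg h2]
              have hRa : R ∈ P.Rfam.erase R' := Finset.mem_erase.2 ⟨h1, hR⟩
              have hRb : Rx ∈ P.Rfam.erase R' := Finset.mem_erase.2 ⟨h2, hRx⟩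
              exact fun heq => hne (hfinj (Finset.mem_coe.2 hRa) (Finset.mem_coe.2 hRb) heq)
          · intro R hR d hd hdD
            rcases (hmemD' d).1 hdD with rfl | rfl | rfl | h
            · exact absurd haW (hRW2 R hR a hd)
            · exact absurd ((hfam b _).2 ⟨R, hR, hd⟩) hbV
            · exact absurd ((hfam c _).2 ⟨R, hR, hd⟩) hcV
            · exact absurd (hSW h) (hRW2 R hR d hd)
end
end

section
/- A proper matchable FR-partition of a 3-partite 3-graph has the edge-home property (and is therefore a home-base partition). -/
noncomputable section

attribute [local instance] Classical.propDecidable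

universe u

variable {α : Type u}

section AuxHelpers

lemma mem_evset_s8 {d : α × α × α} {x : α} :
    x ∈ evset d ↔ x = d.1 ∨ x = d.2.1 ∨ x = d.2.2 := by
  simp [evset]

lemma evset_nonempty (d : α × α × α) : (evset d).Nonempty := ⟨d.1, by simp [evset]⟩

lemma eq1_of_mem (H : TriSys α) {d : α × α × α} {x : α} (hd : d ∈ H.edges)
    (hx : x ∈ evset d) (h1 : x ∈ H.V1) : x = d.1 := by
  rcases mem_evset_s8.mp hx with h | h | h
  · exact h
  · exfalso; rw [h] at h1; exact Finset.disjoint_left.mp H.h12 h1 (H.mem2 d hd)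
  · exfalso; rw [h] at h1; exact Finset.disjoint_left.mp H.h13 h1 (H.mem3 d hd)

lemma eq2_of_mem (H : TriSys α) {d : α × α × α} {x : α} (hd : d ∈ H.edges)
    (hx : x ∈ evset d) (h1 : x ∈ H.V2) : x = d.2.1 := by
  rcases mem_evset_s8.mp hx with h | h | h
  · exfalso; rw [h] at h1; exact Finset.disjoint_left.mp H.h12 (H.mem1 d hd) h1
  · exact h
  · exfalso; rw [h] at h1; exact Finset.disjoint_left.mp H.h23 h1 (H.mem3 d hd)

lemma eq3_of_mem (H : TriSys α) {d : α × α × α} {x : α} (hd : d ∈ H.edges)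
    (hx : x ∈ evset d) (h1 : x ∈ H.V3) : x = d.2.2 := by
  rcases mem_evset_s8.mp hx with h | h | h
  · exfalso; rw [h] at h1; exact Finset.disjoint_left.mp H.h13 (H.mem1 d hd) h1
  · exfalso; rw [h] at h1; exact Finset.disjoint_left.mp H.h23 (H.mem2 d hd) h1
  · exact h

lemma radj_edge_V1 (H : TriSys α) (R : Finset α) (r1 r2 r3 w : α)
    (hr1 : r1 ∈ H.V1) (hr2 : r2 ∈ H.V2) (hr3 : r3 ∈ H.V3) (hReq : R = {r1, r2, r3})
    (hw : w ∈ H.V1) (hwR : w ∉ R) (h : RAdj H R w) : (w, r2, r3) ∈ H.edges := by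
  obtain ⟨d, hd, hwd, hcard⟩ := h
  obtain ⟨d1, d2, d3⟩ := d
  have hd2 : d2 ∈ H.V2 := H.mem2 _ hd
  have hd3 : d3 ∈ H.V3 := H.mem3 _ hd
  have hw1 : w = d1 := eq1_of_mem H hd hwd hw
  have h2 : d2 = r2 := by
    by_contra hne2
    have hsub : evset (d1, d2, d3) ∩ R ⊆ {d3} := by
      intro u hu
      rw [Finset.mem_inter] at hu
      obtain ⟨hu1, hu2⟩ := hu
      rcases mem_evset_s8.mp hu1 with rfl | rfl | rfl
      · exact absurd hu2 (hw1 ▸ hwR)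
      · exfalso
        rw [hReq, Finset.mem_insert, Finset.mem_insert, Finset.mem_singleton] at hu2
        rcases hu2 with h | h | h
        · rw [h] at hd2; exact Finset.disjoint_left.mp H.h12 hr1 hd2
        · exact hne2 h
        · rw [h] at hd2; exact Finset.disjoint_left.mp H.h23 hd2 hr3
      · exact Finset.mem_singleton_self _
    have hc := Finset.card_le_card hsub
    rw [Finset.card_singleton] at hc
    omega
  have h3 : d3 = r3 := by
    by_contra hne3
    have hsub : evset (d1, d2, d3) ∩ R ⊆ {d2} := by
      intro u hu
      rw [Finset.mem_inter] at hu
      obtain ⟨hu1, hu2⟩ := hu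
      rcases mem_evset_s8.mp hu1 with rfl | rfl | rfl
      · exact absurd hu2 (hw1 ▸ hwR)
      · exact Finset.mem_singleton_self _
      · exfalso
        rw [hReq, Finset.mem_insert, Finset.mem_insert, Finset.mem_singleton] at hu2
        rcases hu2 with h | h | h
        · rw [h] at hd3; exact Finset.disjoint_left.mp H.h13 hr1 hd3
        · rw [h] at hd3; exact Finset.disjoint_left.mp H.h23 hr2 hd3
        · exact hne3 h
    have hc := Finset.card_le_card hsub
    rw [Finset.card_singleton] at hc
    omega
  rw [hw1, ← h2, ← h3]
  exact hd

lemma radj_edge_V2 (H : TriSys α) (R : Finset α) (r1 r2 r3 w : α)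
    (hr1 : r1 ∈ H.V1) (hr2 : r2 ∈ H.V2) (hr3 : r3 ∈ H.V3) (hReq : R = {r1, r2, r3})
    (hw : w ∈ H.V2) (hwR : w ∉ R) (h : RAdj H R w) : (r1, w, r3) ∈ H.edges := by
  obtain ⟨d, hd, hwd, hcard⟩ := h
  obtain ⟨d1, d2, d3⟩ := d
  have hd1 : d1 ∈ H.V1 := H.mem1 _ hd
  have hd3 : d3 ∈ H.V3 := H.mem3 _ hd
  have hw1 : w = d2 := eq2_of_mem H hd hwd hw
  have h1 : d1 = r1 := by
    by_contra hne1
    have hsub : evset (d1, d2, d3) ∩ R ⊆ {d3} := by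
      intro u hu
      rw [Finset.mem_inter] at hu
      obtain ⟨hu1, hu2⟩ := hu
      rcases mem_evset_s8.mp hu1 with rfl | rfl | rfl
      · exfalso
        rw [hReq, Finset.mem_insert, Finset.mem_insert, Finset.mem_singleton] at hu2
        rcases hu2 with h | h | h
        · exact hne1 h
        · rw [h] at hd1; exact Finset.disjoint_left.mp H.h12 hd1 hr2
        · rw [h] at hd1; exact Finset.disjoint_left.mp H.h13 hd1 hr3
      · exact absurd hu2 (hw1 ▸ hwR)
      · exact Finset.mem_singleton_self _
    have hc := Finset.card_le_card hsub
    rw [Finset.card_singleton] at hc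
    omega
  have h3 : d3 = r3 := by
    by_contra hne3
    have hsub : evset (d1, d2, d3) ∩ R ⊆ {d1} := by
      intro u hu
      rw [Finset.mem_inter] at hu
      obtain ⟨hu1, hu2⟩ := hu
      rcases mem_evset_s8.mp hu1 with rfl | rfl | rfl
      · exact Finset.mem_singleton_self _
      · exact absurd hu2 (hw1 ▸ hwR)
      · exfalso
        rw [hReq, Finset.mem_insert, Finset.mem_insert, Finset.mem_singleton] at hu2
        rcases hu2 with h | h | h
        · rw [h] at hd3; exact Finset.disjoint_left.mp H.h13 hr1 hd3
        · rw [h] at hd3; exact Finset.disjoint_left.mp H.h23 hr2 hd3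
        · exact hne3 h
    have hc := Finset.card_le_card hsub
    rw [Finset.card_singleton] at hc
    omega
  rw [hw1, ← h1, ← h3]
  exact hd

lemma radj_edge_V3 (H : TriSys α) (R : Finset α) (r1 r2 r3 w : α)
    (hr1 : r1 ∈ H.V1) (hr2 : r2 ∈ H.V2) (hr3 : r3 ∈ H.V3) (hReq : R = {r1, r2, r3})
    (hw : w ∈ H.V3) (hwR : w ∉ R) (h : RAdj H R w) : (r1, r2, w) ∈ H.edges := by
  obtain ⟨d, hd, hwd, hcard⟩ := h
  obtain ⟨d1, d2, d3⟩ := d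
  have hd1 : d1 ∈ H.V1 := H.mem1 _ hd
  have hd2 : d2 ∈ H.V2 := H.mem2 _ hd
  have hw1 : w = d3 := eq3_of_mem H hd hwd hw
  have h1 : d1 = r1 := by
    by_contra hne1
    have hsub : evset (d1, d2, d3) ∩ R ⊆ {d2} := by
      intro u hu
      rw [Finset.mem_inter] at hu
      obtain ⟨hu1, hu2⟩ := hu
      rcases mem_evset_s8.mp hu1 with rfl | rfl | rfl
      · exfalso
        rw [hReq, Finset.mem_insert, Finset.mem_insert, Finset.mem_singleton] at hu2
        rcases hu2 with h | h | h
        · exact hne1 h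
        · rw [h] at hd1; exact Finset.disjoint_left.mp H.h12 hd1 hr2
        · rw [h] at hd1; exact Finset.disjoint_left.mp H.h13 hd1 hr3
      · exact Finset.mem_singleton_self _
      · exact absurd hu2 (hw1 ▸ hwR)
    have hc := Finset.card_le_card hsub
    rw [Finset.card_singleton] at hc
    omega
  have h2 : d2 = r2 := by
    by_contra hne2
    have hsub : evset (d1, d2, d3) ∩ R ⊆ {d1} := by
      intro u hu
      rw [Finset.mem_inter] at hu
      obtain ⟨hu1, hu2⟩ := hu
      rcases mem_evset_s8.mp hu1 with rfl | rfl | rfl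
      · exact Finset.mem_singleton_self _
      · exfalso
        rw [hReq, Finset.mem_insert, Finset.mem_insert, Finset.mem_singleton] at hu2
        rcases hu2 with h | h | h
        · rw [h] at hd2; exact Finset.disjoint_left.mp H.h12 hr1 hd2
        · exact hne2 h
        · rw [h] at hd2; exact Finset.disjoint_left.mp H.h23 hd2 hr3
      · exact absurd hu2 (hw1 ▸ hwR)
    have hc := Finset.card_le_card hsub
    rw [Finset.card_singleton] at hc
    omega
  rw [hw1, ← h1, ← h2]
  exact hd

lemma fano_prop {pa px pb py pc pz : Prop} (h1 : ¬(pa ∧ px)) (h2 : ¬(pb ∧ py))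
    (h3 : ¬(pc ∧ pz)) (h4 : ¬((pa ∨ px) ∧ (pb ∨ py) ∧ (pc ∨ pz))) :
    (¬pa ∧ ¬pb ∧ ¬pc) ∨ (¬pa ∧ ¬py ∧ ¬pz) ∨ (¬px ∧ ¬pb ∧ ¬pz) ∨ (¬px ∧ ¬py ∧ ¬pc) := by
  tauto

lemma fano_avoid (H : TriSys α) (F : Finset α) (hF : IsMultiFano H F)
    (e : α × α × α) (he : e ∈ H.edges) (hne : ¬ evset e ⊆ F) :
    ∃ d, d ∈ H.edges ∧ evset d ⊆ F ∧ Disjoint (evset d) (evset e) := by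
  obtain ⟨a, b, c, x, y, z, ha, hx, hb, hy, hc, hz, hax, hby, hcz, hFeq, hind⟩ := hF
  have hedge : ∀ d ∈ FanoEdges a b c x y z, d ∈ H.edges ∧ evset d ⊆ F := by
    intro d hd
    rw [← hind, inducedEdges, Multiset.mem_toFinset, Multiset.mem_filter] at hd
    exact hd
  have h1 : ¬(a ∈ evset e ∧ x ∈ evset e) := by
    rintro ⟨hh1, hh2⟩
    exact hax ((eq1_of_mem H he hh1 ha).trans (eq1_of_mem H he hh2 hx).symm)
  have h2 : ¬(b ∈ evset e ∧ y ∈ evset e) := by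
    rintro ⟨hh1, hh2⟩
    exact hby ((eq2_of_mem H he hh1 hb).trans (eq2_of_mem H he hh2 hy).symm)
  have h3 : ¬(c ∈ evset e ∧ z ∈ evset e) := by
    rintro ⟨hh1, hh2⟩
    exact hcz ((eq3_of_mem H he hh1 hc).trans (eq3_of_mem H he hh2 hz).symm)
  have h4 : ¬((a ∈ evset e ∨ x ∈ evset e) ∧ (b ∈ evset e ∨ y ∈ evset e) ∧
      (c ∈ evset e ∨ z ∈ evset e)) := by
    rintro ⟨hA, hB, hC⟩
    apply hne
    rw [hFeq]
    intro u hu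
    rcases mem_evset_s8.mp hu with rfl | rfl | rfl
    · rcases hA with h | h
      · rw [← eq1_of_mem H he h ha]; simp
      · rw [← eq1_of_mem H he h hx]; simp
    · rcases hB with h | h
      · rw [← eq2_of_mem H he h hb]; simp
      · rw [← eq2_of_mem H he h hy]; simp
    · rcases hC with h | h
      · rw [← eq3_of_mem H he h hc]; simp
      · rw [← eq3_of_mem H he h hz]; simp
  have hmem : ∀ p q r : α, p ∉ evset e → q ∉ evset e → r ∉ evset e →
      Disjoint (evset (p, q, r)) (evset e) := by
    intro p q r hp hq hr
    rw [Finset.disjoint_left]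
    intro u hu
    rcases mem_evset_s8.mp hu with rfl | rfl | rfl <;> assumption
  have key : (a ∉ evset e ∧ b ∉ evset e ∧ c ∉ evset e) ∨
      (a ∉ evset e ∧ y ∉ evset e ∧ z ∉ evset e) ∨
      (x ∉ evset e ∧ b ∉ evset e ∧ z ∉ evset e) ∨
      (x ∉ evset e ∧ y ∉ evset e ∧ c ∉ evset e) := fano_prop h1 h2 h3 h4
  rcases key with ⟨k1, k2, k3⟩ | ⟨k1, k2, k3⟩ | ⟨k1, k2, k3⟩ | ⟨k1, k2, k3⟩
  · obtain ⟨hm, hs⟩ := hedge (a, b, c) (by simp [FanoEdges])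
    exact ⟨(a, b, c), hm, hs, hmem a b c k1 k2 k3⟩
  · obtain ⟨hm, hs⟩ := hedge (a, y, z) (by simp [FanoEdges])
    exact ⟨(a, y, z), hm, hs, hmem a y z k1 k2 k3⟩
  · obtain ⟨hm, hs⟩ := hedge (x, b, z) (by simp [FanoEdges])
    exact ⟨(x, b, z), hm, hs, hmem x b z k1 k2 k3⟩
  · obtain ⟨hm, hs⟩ := hedge (x, y, c) (by simp [FanoEdges])
    exact ⟨(x, y, c), hm, hs, hmem x y c k1 k2 k3⟩

lemma le_nu (H : TriSys α) (M : Finset (α × α × α)) (hM : H.IsMatching M) :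
    M.card ≤ H.nu := by
  apply le_csSup
  · refine ⟨H.edges.toFinset.card, ?_⟩
    rintro n ⟨M', hM', rfl⟩
    apply Finset.card_le_card
    intro d hd
    exact Multiset.mem_toFinset.mpr (hM'.1 d hd)
  · exact ⟨M, hM, rfl⟩

lemma exists_big_matching (H : TriSys α) (E : Finset (α × α × α))
    (T : Finset (Finset α)) (sel : Finset α → α × α × α)
    (hE : ∀ d ∈ E, d ∈ H.edges) (hT : ∀ A ∈ T, sel A ∈ H.edges)
    (hEd : ∀ d ∈ E, ∀ d' ∈ E, d ≠ d' → Disjoint (evset d) (evset d'))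
    (hET : ∀ d ∈ E, ∀ A ∈ T, Disjoint (evset d) (evset (sel A)))
    (hTT : ∀ A ∈ T, ∀ B ∈ T, A ≠ B → Disjoint (evset (sel A)) (evset (sel B))) :
    ∃ M : Finset (α × α × α), H.IsMatching M ∧ M.card = E.card + T.card := by
  have hinj : Set.InjOn sel ↑T := by
    intro A hA B hB hAB
    by_contra hne
    have hd := hTT A hA B hB hne
    rw [hAB, disjoint_self, Finset.bot_eq_empty] at hd
    have hnonempty := evset_nonempty (sel B)
    rw [hd] at hnonempty
    exact Finset.not_nonempty_empty hnonempty
  have hdisjET : Disjoint E (T.image sel) := by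
    rw [Finset.disjoint_left]
    intro d hd hd'
    obtain ⟨A, hA, hAeq⟩ := Finset.mem_image.mp hd'
    have hdis := hET d hd A hA
    rw [hAeq, disjoint_self, Finset.bot_eq_empty] at hdis
    have hnonempty := evset_nonempty d
    rw [hdis] at hnonempty
    exact Finset.not_nonempty_empty hnonempty
  refine ⟨E ∪ T.image sel, ⟨?_, ?_⟩, ?_⟩
  · intro d hd
    rcases Finset.mem_union.mp hd with h | h
    · exact hE d h
    · obtain ⟨A, hA, hAeq⟩ := Finset.mem_image.mp h
      rw [← hAeq]; exact hT A hA
  · intro u hu v hv huv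
    rw [Finset.mem_coe, Finset.mem_union] at hu hv
    rcases hu with hu | hu <;> rcases hv with hv | hv
    · exact hEd u hu v hv huv
    · obtain ⟨A, hA, hAeq⟩ := Finset.mem_image.mp hv
      rw [← hAeq]; exact hET u hu A hA
    · obtain ⟨A, hA, hAeq⟩ := Finset.mem_image.mp hu
      rw [← hAeq]; exact (hET v hv A hA).symm
    · obtain ⟨A, hA, hAeq⟩ := Finset.mem_image.mp hu
      obtain ⟨B, hB, hBeq⟩ := Finset.mem_image.mp hv
      rw [← hAeq, ← hBeq]
      refine hTT A hA B hB fun h => huv ?_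
      rw [← hAeq, ← hBeq, h]
  · rw [Finset.card_union_of_disjoint hdisjET, Finset.card_image_of_injOn hinj]

end AuxHelpers

/-- A proper matchable FR-partition of a 3-partite 3-graph has the edge-home
property, and is therefore a home-base partition. -/
theorem proper_matchable_edgeHome (H : TriSys α) (P : FRData α)
    (hFR : IsFRPartition H P) (hM : IsMatchable H P)
    (hprop : IsProper H P) :
    EdgeHome H P ∧ IsHomeBasePartition H P := by
  have hEH : EdgeHome H P := by
    by_contra hcon
    rw [EdgeHome] at hcon
    push_neg at hcon
    obtain ⟨e, he, hnF, hnR⟩ := hcon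
    obtain ⟨hFdisj, hRdisj, hFRd, hFW, hRW, hcover, hFfano, hRstr, hcard⟩ := hFR
    have hv1 : e.1 ∈ H.V1 := H.mem1 e he
    have hv2 : e.2.1 ∈ H.V2 := H.mem2 e he
    have hv3 : e.2.2 ∈ H.V3 := H.mem3 e he
    obtain ⟨f1, hf1inj, hf1⟩ := hM 0
    obtain ⟨f2, hf2inj, hf2⟩ := hM 1
    obtain ⟨f3, hf3inj, hf3⟩ := hM 2
    have hf1p : ∀ R ∈ P.Rfam, f1 R ∈ P.W ∧ f1 R ∈ H.V1 ∧ RAdj H R (f1 R) := by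
      intro R hR
      obtain ⟨h1, h2⟩ := hf1 R hR
      exact ⟨(Finset.mem_inter.mp h1).1, (Finset.mem_inter.mp h1).2, h2⟩
    have hf2p : ∀ R ∈ P.Rfam, f2 R ∈ P.W ∧ f2 R ∈ H.V2 ∧ RAdj H R (f2 R) := by
      intro R hR
      obtain ⟨h1, h2⟩ := hf2 R hR
      exact ⟨(Finset.mem_inter.mp h1).1, (Finset.mem_inter.mp h1).2, h2⟩
    have hf3p : ∀ R ∈ P.Rfam, f3 R ∈ P.W ∧ f3 R ∈ H.V3 ∧ RAdj H R (f3 R) := by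
      intro R hR
      obtain ⟨h1, h2⟩ := hf3 R hR
      exact ⟨(Finset.mem_inter.mp h1).1, (Finset.mem_inter.mp h1).2, h2⟩
    have hFnR : ∀ A, A ∈ P.Ffam → A ∉ P.Rfam := by
      intro A hA hA'
      have hd := hFRd A hA A hA'
      rw [disjoint_self, Finset.bot_eq_empty] at hd
      obtain ⟨a, b, c, x, y, z, _, _, _, _, _, _, _, _, _, hAeq, _⟩ := hFfano A hA
      rw [hd] at hAeq
      exact (Finset.insert_ne_empty _ _) hAeq.symm
    -- selection for the Fano parts
    have claimF : ∀ A : Finset α, ∃ d : α × α × α, A ∈ P.Ffam →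
        d ∈ H.edges ∧ evset d ⊆ A ∧ Disjoint (evset d) (evset e) := by
      intro A
      by_cases hA : A ∈ P.Ffam
      · obtain ⟨d, hd, hs, hdis⟩ := fano_avoid H A (hFfano A hA) e he (hnF A hA)
        exact ⟨d, fun _ => ⟨hd, hs, hdis⟩⟩
      · exact ⟨e, fun h => absurd h hA⟩
    -- selection for the R parts
    have claimR : ∀ R : Finset α, ∃ d : α × α × α, R ∈ P.Rfam →
        ¬(f1 R = e.1 ∧ f2 R = e.2.1 ∧ f3 R = e.2.2) →
        d ∈ H.edges ∧ Disjoint (evset d) (evset e) ∧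
          evset d ⊆ R ∪ {f1 R, f2 R, f3 R} := by
      intro R
      by_cases hR : R ∈ P.Rfam
      swap
      · exact ⟨e, fun h => absurd h hR⟩
      obtain ⟨r1, hr1, r2, hr2, r3, hr3, hReq⟩ := hRstr R hR
      have hmr1 : r1 ∈ R := by rw [hReq]; simp
      have hmr2 : r2 ∈ R := by rw [hReq]; simp
      have hmr3 : r3 ∈ R := by rw [hReq]; simp
      have hfw1 := hf1p R hR
      have hfw2 := hf2p R hR
      have hfw3 := hf3p R hR
      have hWnR : ∀ u ∈ P.W, u ∉ R := fun u hu => Finset.disjoint_right.mp (hRW R hR) hu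
      have hr12 : r1 ≠ r2 := fun hh => Finset.disjoint_left.mp H.h12 hr1 (hh ▸ hr2)
      have hr13 : r1 ≠ r3 := fun hh => Finset.disjoint_left.mp H.h13 hr1 (hh ▸ hr3)
      have hr23 : r2 ≠ r3 := fun hh => Finset.disjoint_left.mp H.h23 hr2 (hh ▸ hr3)
      have hpair : ∀ u w : α, u ∈ evset e → u ∈ R → w ∈ evset e → w ∈ R → u = w := by
        intro u w hu1 hu2 hw1 hw2
        by_contra hne
        have h2le : 2 ≤ (evset e ∩ R).card :=
          Finset.one_lt_card.mpr ⟨u, Finset.mem_inter.mpr ⟨hu1, hu2⟩, w,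
            Finset.mem_inter.mpr ⟨hw1, hw2⟩, hne⟩
        have := hnR R hR
        omega
      have opt1 : f1 R ≠ e.1 → r2 ∉ evset e → r3 ∉ evset e →
          (f1 R, r2, r3) ∈ H.edges ∧ Disjoint (evset (f1 R, r2, r3)) (evset e) ∧
          evset (f1 R, r2, r3) ⊆ R ∪ {f1 R, f2 R, f3 R} := by
        intro hne hm2 hm3
        refine ⟨radj_edge_V1 H R r1 r2 r3 (f1 R) hr1 hr2 hr3 hReq hfw1.2.1
          (hWnR _ hfw1.1) hfw1.2.2, ?_, ?_⟩
        · rw [Finset.disjoint_left]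
          intro u hu
          rcases mem_evset_s8.mp hu with rfl | rfl | rfl
          · exact fun hue => hne (eq1_of_mem H he hue hfw1.2.1)
          · exact hm2
          · exact hm3
        · intro u hu
          rcases mem_evset_s8.mp hu with rfl | rfl | rfl
          · exact Finset.mem_union_right _ (by simp)
          · exact Finset.mem_union_left _ hmr2
          · exact Finset.mem_union_left _ hmr3
      have opt2 : f2 R ≠ e.2.1 → r1 ∉ evset e → r3 ∉ evset e →
          (r1, f2 R, r3) ∈ H.edges ∧ Disjoint (evset (r1, f2 R, r3)) (evset e) ∧
          evset (r1, f2 R, r3) ⊆ R ∪ {f1 R, f2 R, f3 R} := by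
        intro hne hm1 hm3
        refine ⟨radj_edge_V2 H R r1 r2 r3 (f2 R) hr1 hr2 hr3 hReq hfw2.2.1
          (hWnR _ hfw2.1) hfw2.2.2, ?_, ?_⟩
        · rw [Finset.disjoint_left]
          intro u hu
          rcases mem_evset_s8.mp hu with rfl | rfl | rfl
          · exact hm1
          · exact fun hue => hne (eq2_of_mem H he hue hfw2.2.1)
          · exact hm3
        · intro u hu
          rcases mem_evset_s8.mp hu with rfl | rfl | rfl
          · exact Finset.mem_union_left _ hmr1
          · exact Finset.mem_union_right _ (by simp)
          · exact Finset.mem_union_left _ hmr3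
      have opt3 : f3 R ≠ e.2.2 → r1 ∉ evset e → r2 ∉ evset e →
          (r1, r2, f3 R) ∈ H.edges ∧ Disjoint (evset (r1, r2, f3 R)) (evset e) ∧
          evset (r1, r2, f3 R) ⊆ R ∪ {f1 R, f2 R, f3 R} := by
        intro hne hm1 hm2
        refine ⟨radj_edge_V3 H R r1 r2 r3 (f3 R) hr1 hr2 hr3 hReq hfw3.2.1
          (hWnR _ hfw3.1) hfw3.2.2, ?_, ?_⟩
        · rw [Finset.disjoint_left]
          intro u hu
          rcases mem_evset_s8.mp hu with rfl | rfl | rfl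
          · exact hm1
          · exact hm2
          · exact fun hue => hne (eq3_of_mem H he hue hfw3.2.1)
        · intro u hu
          rcases mem_evset_s8.mp hu with rfl | rfl | rfl
          · exact Finset.mem_union_left _ hmr1
          · exact Finset.mem_union_left _ hmr2
          · exact Finset.mem_union_right _ (by simp)
      by_cases hm1 : r1 ∈ evset e
      · have hm2 : r2 ∉ evset e := fun h => hr12 (hpair r1 r2 hm1 hmr1 h hmr2)
        have hm3 : r3 ∉ evset e := fun h => hr13 (hpair r1 r3 hm1 hmr1 h hmr3)
        have hne1 : f1 R ≠ e.1 := by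
          intro hh
          apply hWnR _ hfw1.1
          rw [hh, ← eq1_of_mem H he hm1 hr1]
          exact hmr1
        exact ⟨(f1 R, r2, r3), fun _ _ => opt1 hne1 hm2 hm3⟩
      by_cases hm2 : r2 ∈ evset e
      · have hm3 : r3 ∉ evset e := fun h => hr23 (hpair r2 r3 hm2 hmr2 h hmr3)
        have hne2 : f2 R ≠ e.2.1 := by
          intro hh
          apply hWnR _ hfw2.1
          rw [hh, ← eq2_of_mem H he hm2 hr2]
          exact hmr2
        exact ⟨(r1, f2 R, r3), fun _ _ => opt2 hne2 hm1 hm3⟩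
      by_cases hm3 : r3 ∈ evset e
      · have hne3 : f3 R ≠ e.2.2 := by
          intro hh
          apply hWnR _ hfw3.1
          rw [hh, ← eq3_of_mem H he hm3 hr3]
          exact hmr3
        exact ⟨(r1, r2, f3 R), fun _ _ => opt3 hne3 hm1 hm2⟩
      by_cases hb : f1 R = e.1 ∧ f2 R = e.2.1 ∧ f3 R = e.2.2
      · exact ⟨e, fun _ hnb => absurd hb hnb⟩
      rw [not_and_or, not_and_or] at hb
      rcases hb with hb | hb | hb
      · exact ⟨(f1 R, r2, r3), fun _ _ => opt1 hb hm2 hm3⟩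
      · exact ⟨(r1, f2 R, r3), fun _ _ => opt2 hb hm1 hm3⟩
      · exact ⟨(r1, r2, f3 R), fun _ _ => opt3 hb hm1 hm2⟩
    choose selF hselF using claimF
    choose selR hselR using claimR
    set sel : Finset α → α × α × α :=
      fun A => if A ∈ P.Ffam then selF A else selR A with hsel
    have hFprops : ∀ A ∈ P.Ffam, sel A ∈ H.edges ∧ evset (sel A) ⊆ A ∧
        Disjoint (evset (sel A)) (evset e) := by
      intro A hA
      have : sel A = selF A := by simp only [hsel]; rw [if_pos hA]
      rw [this]
      exact hselF A hA
    have hRgoodprops : ∀ A ∈ P.Rfam, ¬(f1 A = e.1 ∧ f2 A = e.2.1 ∧ f3 A = e.2.2) →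
        sel A ∈ H.edges ∧ Disjoint (evset (sel A)) (evset e) ∧
        evset (sel A) ⊆ A ∪ {f1 A, f2 A, f3 A} := by
      intro A hA hnb
      have : sel A = selR A := by
        simp only [hsel]; rw [if_neg (fun h => hFnR A h hA)]
      rw [this]
      exact hselR A hA hnb
    have hFFsup : ∀ A ∈ P.Ffam, ∀ B ∈ P.Ffam, A ≠ B →
        Disjoint (evset (sel A)) (evset (sel B)) := by
      intro A hA B hB hne
      exact Finset.disjoint_of_subset_left (hFprops A hA).2.1
        (Finset.disjoint_of_subset_right (hFprops B hB).2.1 (hFdisj A hA B hB hne))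
    have hFRsup : ∀ A ∈ P.Ffam, ∀ B ∈ P.Rfam,
        ¬(f1 B = e.1 ∧ f2 B = e.2.1 ∧ f3 B = e.2.2) →
        Disjoint (evset (sel A)) (evset (sel B)) := by
      intro A hA B hB hnb
      rw [Finset.disjoint_left]
      intro u hu hu'
      have huA : u ∈ A := (hFprops A hA).2.1 hu
      rcases Finset.mem_union.mp ((hRgoodprops B hB hnb).2.2 hu') with h | h
      · exact Finset.disjoint_left.mp (hFRd A hA B hB) huA h
      · have huW : u ∈ P.W := by
          rw [Finset.mem_insert, Finset.mem_insert, Finset.mem_singleton] at h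
          rcases h with rfl | rfl | rfl
          · exact (hf1p B hB).1
          · exact (hf2p B hB).1
          · exact (hf3p B hB).1
        exact Finset.disjoint_left.mp (hFW A hA) huA huW
    have hRRsup : ∀ A ∈ P.Rfam, ∀ B ∈ P.Rfam,
        ¬(f1 A = e.1 ∧ f2 A = e.2.1 ∧ f3 A = e.2.2) →
        ¬(f1 B = e.1 ∧ f2 B = e.2.1 ∧ f3 B = e.2.2) →
        A ≠ B → Disjoint (evset (sel A)) (evset (sel B)) := by
      intro A hA B hB hgA hgB hne
      rw [Finset.disjoint_left]
      intro u hu hu'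
      have m1 := (hRgoodprops A hA hgA).2.2 hu
      have m2 := (hRgoodprops B hB hgB).2.2 hu'
      rcases Finset.mem_union.mp m1 with huA | huf <;>
        rcases Finset.mem_union.mp m2 with huB | huf'
      · exact Finset.disjoint_left.mp (hRdisj A hA B hB hne) huA huB
      · have huW : u ∈ P.W := by
          rw [Finset.mem_insert, Finset.mem_insert, Finset.mem_singleton] at huf'
          rcases huf' with rfl | rfl | rfl
          · exact (hf1p B hB).1
          · exact (hf2p B hB).1
          · exact (hf3p B hB).1
        exact Finset.disjoint_left.mp (hRW A hA) huA huW
      · have huW : u ∈ P.W := by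
          rw [Finset.mem_insert, Finset.mem_insert, Finset.mem_singleton] at huf
          rcases huf with rfl | rfl | rfl
          · exact (hf1p A hA).1
          · exact (hf2p A hA).1
          · exact (hf3p A hA).1
        exact Finset.disjoint_left.mp (hRW B hB) huB huW
      · rw [Finset.mem_insert, Finset.mem_insert, Finset.mem_singleton] at huf huf'
        rcases huf with h | h | h <;> rcases huf' with h' | h' | h'
        · exact hne (hf1inj (Finset.mem_coe.mpr hA) (Finset.mem_coe.mpr hB)
            (h.symm.trans h'))
        · exact Finset.disjoint_left.mp H.h12 (h.symm ▸ (hf1p A hA).2.1)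
            (h'.symm ▸ (hf2p B hB).2.1)
        · exact Finset.disjoint_left.mp H.h13 (h.symm ▸ (hf1p A hA).2.1)
            (h'.symm ▸ (hf3p B hB).2.1)
        · exact Finset.disjoint_left.mp H.h12 (h'.symm ▸ (hf1p B hB).2.1)
            (h.symm ▸ (hf2p A hA).2.1)
        · exact hne (hf2inj (Finset.mem_coe.mpr hA) (Finset.mem_coe.mpr hB)
            (h.symm.trans h'))
        · exact Finset.disjoint_left.mp H.h23 (h.symm ▸ (hf2p A hA).2.1)
            (h'.symm ▸ (hf3p B hB).2.1)
        · exact Finset.disjoint_left.mp H.h13 (h'.symm ▸ (hf1p B hB).2.1)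
            (h.symm ▸ (hf3p A hA).2.1)
        · exact Finset.disjoint_left.mp H.h23 (h'.symm ▸ (hf2p B hB).2.1)
            (h.symm ▸ (hf3p A hA).2.1)
        · exact hne (hf3inj (Finset.mem_coe.mpr hA) (Finset.mem_coe.mpr hB)
            (h.symm.trans h'))
    by_cases hbad : ∃ R ∈ P.Rfam, f1 R = e.1 ∧ f2 R = e.2.1 ∧ f3 R = e.2.2
    case neg =>
      have hgood : ∀ R ∈ P.Rfam, ¬(f1 R = e.1 ∧ f2 R = e.2.1 ∧ f3 R = e.2.2) :=
        fun R hR hbR => hbad ⟨R, hR, hbR⟩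
      have hTmem : ∀ A ∈ P.Ffam ∪ P.Rfam, sel A ∈ H.edges := by
        intro A hA
        rcases Finset.mem_union.mp hA with h | h
        · exact (hFprops A h).1
        · exact (hRgoodprops A h (hgood A h)).1
      have hTdisjE : ∀ A ∈ P.Ffam ∪ P.Rfam, Disjoint (evset (sel A)) (evset e) := by
        intro A hA
        rcases Finset.mem_union.mp hA with h | h
        · exact (hFprops A h).2.2
        · exact (hRgoodprops A h (hgood A h)).2.1
      have hTT : ∀ A ∈ P.Ffam ∪ P.Rfam, ∀ B ∈ P.Ffam ∪ P.Rfam, A ≠ B →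
          Disjoint (evset (sel A)) (evset (sel B)) := by
        intro A hA B hB hne
        rcases Finset.mem_union.mp hA with h | h <;>
          rcases Finset.mem_union.mp hB with h' | h'
        · exact hFFsup A h B h' hne
        · exact hFRsup A h B h' (hgood B h')
        · exact (hFRsup B h' A h (hgood A h)).symm
        · exact hRRsup A h B h' (hgood A h) (hgood B h') hne
      obtain ⟨M, hMm, hMc⟩ := exists_big_matching H {e} (P.Ffam ∪ P.Rfam) sel
        (by intro d hd; rw [Finset.mem_singleton] at hd; rw [hd]; exact he)
        hTmem
        (by
          intro d hd d' hd' hne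
          rw [Finset.mem_singleton] at hd hd'
          exact absurd (hd.trans hd'.symm) hne)
        (by
          intro d hd A hA
          rw [Finset.mem_singleton] at hd
          rw [hd]
          exact (hTdisjE A hA).symm)
        hTT
      have hle := le_nu H M hMm
      rw [Finset.card_union_of_disjoint (Finset.disjoint_left.mpr hFnR),
        Finset.card_singleton] at hMc
      omega
    case pos =>
      obtain ⟨R0, hR0, hb1, hb2, hb3⟩ := hbad
      obtain ⟨r1, hr1, r2, hr2, r3, hr3, hReq⟩ := hRstr R0 hR0
      have he1W : e.1 ∈ P.W := hb1 ▸ (hf1p R0 hR0).1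
      have he2W : e.2.1 ∈ P.W := hb2 ▸ (hf2p R0 hR0).1
      have he3W : e.2.2 ∈ P.W := hb3 ▸ (hf3p R0 hR0).1
      have hr1R : r1 ∈ R0 := by rw [hReq]; simp
      have hr2R : r2 ∈ R0 := by rw [hReq]; simp
      have hr3R : r3 ∈ R0 := by rw [hReq]; simp
      have hWR : ∀ u ∈ P.W, u ∉ R0 := fun u hu =>
        Finset.disjoint_right.mp (hRW R0 hR0) hu
      have hg1 : (e.1, r2, r3) ∈ H.edges := by
        have hadj := (hf1p R0 hR0).2.2
        rw [hb1] at hadj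
        exact radj_edge_V1 H R0 r1 r2 r3 e.1 hr1 hr2 hr3 hReq hv1 (hWR _ he1W) hadj
      have hg2 : (r1, e.2.1, r3) ∈ H.edges := by
        have hadj := (hf2p R0 hR0).2.2
        rw [hb2] at hadj
        exact radj_edge_V2 H R0 r1 r2 r3 e.2.1 hr1 hr2 hr3 hReq hv2 (hWR _ he2W) hadj
      have hg3 : (r1, r2, e.2.2) ∈ H.edges := by
        have hadj := (hf3p R0 hR0).2.2
        rw [hb3] at hadj
        exact radj_edge_V3 H R0 r1 r2 r3 e.2.2 hr1 hr2 hr3 hReq hv3 (hWR _ he3W) hadj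
      by_cases hind : inducedEdges H ({e.1, e.2.1, e.2.2, r1, r2, r3} : Finset α) =
          FanoEdges e.1 e.2.1 e.2.2 r1 r2 r3
      · apply hprop
        have hset : R0 ∪ evset e = {e.1, e.2.1, e.2.2, r1, r2, r3} := by
          rw [hReq]
          ext u
          simp only [Finset.mem_union, Finset.mem_insert, Finset.mem_singleton, evset]
          tauto
        refine ⟨R0, hR0, e, he, ?_, ?_⟩
        · intro u hu
          rcases mem_evset_s8.mp hu with rfl | rfl | rfl <;> assumption
        · refine ⟨e.1, e.2.1, e.2.2, r1, r2, r3, hv1, hr1, hv2, hr2, hv3, hr3,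
            ?_, ?_, ?_, hset, ?_⟩
          · exact fun h => hWR _ he1W (by rw [h]; exact hr1R)
          · exact fun h => hWR _ he2W (by rw [h]; exact hr2R)
          · exact fun h => hWR _ he3W (by rw [h]; exact hr3R)
          · rw [hset]
            exact hind
      · have hFsub : FanoEdges e.1 e.2.1 e.2.2 r1 r2 r3 ⊆
            inducedEdges H ({e.1, e.2.1, e.2.2, r1, r2, r3} : Finset α) := by
          intro d hd
          rw [inducedEdges, Multiset.mem_toFinset, Multiset.mem_filter]
          rw [FanoEdges, Finset.mem_insert, Finset.mem_insert, Finset.mem_insert,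
            Finset.mem_singleton] at hd
          rcases hd with rfl | rfl | rfl | rfl
          · exact ⟨he, by intro u hu; rcases mem_evset_s8.mp hu with rfl | rfl | rfl <;> simp⟩
          · exact ⟨hg1, by intro u hu; rcases mem_evset_s8.mp hu with rfl | rfl | rfl <;> simp⟩
          · exact ⟨hg2, by intro u hu; rcases mem_evset_s8.mp hu with rfl | rfl | rfl <;> simp⟩
          · exact ⟨hg3, by intro u hu; rcases mem_evset_s8.mp hu with rfl | rfl | rfl <;> simp⟩
        have hex : ∃ g, g ∈ inducedEdges H ({e.1, e.2.1, e.2.2, r1, r2, r3} : Finset α) ∧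
            g ∉ FanoEdges e.1 e.2.1 e.2.2 r1 r2 r3 := by
          by_contra hcc
          push_neg at hcc
          exact hind (Finset.Subset.antisymm (fun g hg => hcc g hg) hFsub)
        obtain ⟨g, hgmem, hgnot⟩ := hex
        rw [inducedEdges, Multiset.mem_toFinset, Multiset.mem_filter] at hgmem
        obtain ⟨hgE, hgS⟩ := hgmem
        -- goodness of all other R's
        have hgoodB : ∀ A ∈ P.Rfam.erase R0,
            ¬(f1 A = e.1 ∧ f2 A = e.2.1 ∧ f3 A = e.2.2) := by
          intro A hA hbA
          have hA' := Finset.mem_of_mem_erase hA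
          have : A = R0 := hf1inj (Finset.mem_coe.mpr hA') (Finset.mem_coe.mpr hR0)
            (by rw [hbA.1, hb1])
          exact Finset.ne_of_mem_erase hA this
        have hselS : ∀ A ∈ P.Ffam ∪ P.Rfam.erase R0,
            Disjoint (evset (sel A)) ({e.1, e.2.1, e.2.2, r1, r2, r3} : Finset α) := by
          intro A hA
          rw [Finset.disjoint_right]
          intro u hu hu'
          rcases Finset.mem_union.mp hA with hAf | hAr
          · have huA : u ∈ A := (hFprops A hAf).2.1 hu'
            rw [Finset.mem_insert, Finset.mem_insert, Finset.mem_insert,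
              Finset.mem_insert, Finset.mem_insert, Finset.mem_singleton] at hu
            rcases hu with rfl | rfl | rfl | rfl | rfl | rfl
            · exact Finset.disjoint_left.mp (hFW A hAf) huA he1W
            · exact Finset.disjoint_left.mp (hFW A hAf) huA he2W
            · exact Finset.disjoint_left.mp (hFW A hAf) huA he3W
            · exact Finset.disjoint_left.mp (hFRd A hAf R0 hR0) huA hr1R
            · exact Finset.disjoint_left.mp (hFRd A hAf R0 hR0) huA hr2R
            · exact Finset.disjoint_left.mp (hFRd A hAf R0 hR0) huA hr3R
          · have hAr' := Finset.mem_of_mem_erase hAr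
            have hAne : A ≠ R0 := Finset.ne_of_mem_erase hAr
            rcases Finset.mem_union.mp
              ((hRgoodprops A hAr' (hgoodB A hAr)).2.2 hu') with huA | huf
            · rw [Finset.mem_insert, Finset.mem_insert, Finset.mem_insert,
                Finset.mem_insert, Finset.mem_insert, Finset.mem_singleton] at hu
              rcases hu with rfl | rfl | rfl | rfl | rfl | rfl
              · exact Finset.disjoint_left.mp (hRW A hAr') huA he1W
              · exact Finset.disjoint_left.mp (hRW A hAr') huA he2W
              · exact Finset.disjoint_left.mp (hRW A hAr') huA he3W
              · exact Finset.disjoint_left.mp (hRdisj A hAr' R0 hR0 hAne) huA hr1R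
              · exact Finset.disjoint_left.mp (hRdisj A hAr' R0 hR0 hAne) huA hr2R
              · exact Finset.disjoint_left.mp (hRdisj A hAr' R0 hR0 hAne) huA hr3R
            · rw [Finset.mem_insert, Finset.mem_insert, Finset.mem_singleton] at huf
              rw [Finset.mem_insert, Finset.mem_insert, Finset.mem_insert,
                Finset.mem_insert, Finset.mem_insert, Finset.mem_singleton] at hu
              have hfa1 := (hf1p A hAr')
              have hfa2 := (hf2p A hAr')
              have hfa3 := (hf3p A hAr')
              rcases huf with rfl | rfl | rfl <;> rcases hu with h | h | h | h | h | h
              · exact hAne (hf1inj (Finset.mem_coe.mpr hAr') (Finset.mem_coe.mpr hR0)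
                  (by rw [h, hb1]))
              · exact Finset.disjoint_left.mp H.h12 (h ▸ hfa1.2.1) hv2
              · exact Finset.disjoint_left.mp H.h13 (h ▸ hfa1.2.1) hv3
              · exact hWR _ hfa1.1 (h ▸ hr1R)
              · exact Finset.disjoint_left.mp H.h12 (h ▸ hfa1.2.1) hr2
              · exact Finset.disjoint_left.mp H.h13 (h ▸ hfa1.2.1) hr3
              · exact Finset.disjoint_left.mp H.h12 hv1 (h ▸ hfa2.2.1)
              · exact hAne (hf2inj (Finset.mem_coe.mpr hAr') (Finset.mem_coe.mpr hR0)
                  (by rw [h, hb2]))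
              · exact Finset.disjoint_left.mp H.h23 (h ▸ hfa2.2.1) hv3
              · exact Finset.disjoint_left.mp H.h12 hr1 (h ▸ hfa2.2.1)
              · exact hWR _ hfa2.1 (h ▸ hr2R)
              · exact Finset.disjoint_left.mp H.h23 (h ▸ hfa2.2.1) hr3
              · exact Finset.disjoint_left.mp H.h13 hv1 (h ▸ hfa3.2.1)
              · exact Finset.disjoint_left.mp H.h23 hv2 (h ▸ hfa3.2.1)
              · exact hAne (hf3inj (Finset.mem_coe.mpr hAr') (Finset.mem_coe.mpr hR0)
                  (by rw [h, hb3]))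
              · exact Finset.disjoint_left.mp H.h13 hr1 (h ▸ hfa3.2.1)
              · exact Finset.disjoint_left.mp H.h23 hr2 (h ▸ hfa3.2.1)
              · exact hWR _ hfa3.1 (h ▸ hr3R)
        have endgame : ∀ d p : α × α × α, d ∈ H.edges → p ∈ H.edges →
            Disjoint (evset d) (evset p) →
            evset d ⊆ ({e.1, e.2.1, e.2.2, r1, r2, r3} : Finset α) →
            evset p ⊆ ({e.1, e.2.1, e.2.2, r1, r2, r3} : Finset α) → False := by
          intro d p hdE hpE hdp hdS hpS
          have hTmem : ∀ A ∈ P.Ffam ∪ P.Rfam.erase R0, sel A ∈ H.edges := by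
            intro A hA
            rcases Finset.mem_union.mp hA with h | h
            · exact (hFprops A h).1
            · exact (hRgoodprops A (Finset.mem_of_mem_erase h) (hgoodB A h)).1
          have hTT : ∀ A ∈ P.Ffam ∪ P.Rfam.erase R0, ∀ B ∈ P.Ffam ∪ P.Rfam.erase R0,
              A ≠ B → Disjoint (evset (sel A)) (evset (sel B)) := by
            intro A hA B hB hne
            rcases Finset.mem_union.mp hA with h | h <;>
              rcases Finset.mem_union.mp hB with h' | h'
            · exact hFFsup A h B h' hne
            · exact hFRsup A h B (Finset.mem_of_mem_erase h') (hgoodB B h')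
            · exact (hFRsup B h' A (Finset.mem_of_mem_erase h) (hgoodB A h)).symm
            · exact hRRsup A (Finset.mem_of_mem_erase h) B (Finset.mem_of_mem_erase h')
                (hgoodB A h) (hgoodB B h') hne
          obtain ⟨M, hMm, hMc⟩ := exists_big_matching H {d, p}
            (P.Ffam ∪ P.Rfam.erase R0) sel
            (by
              intro u hu
              rcases Finset.mem_insert.mp hu with rfl | hu
              · exact hdE
              · rw [Finset.mem_singleton] at hu; rw [hu]; exact hpE)
            hTmem
            (by
              intro u hu u' hu' hne
              rw [Finset.mem_insert, Finset.mem_singleton] at hu hu'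
              rcases hu with hu | hu <;> rcases hu' with hu' | hu'
              · exact absurd (hu.trans hu'.symm) hne
              · rw [hu, hu']; exact hdp
              · rw [hu, hu']; exact hdp.symm
              · exact absurd (hu.trans hu'.symm) hne)
            (by
              intro u hu A hA
              have hsS := hselS A hA
              rcases Finset.mem_insert.mp hu with rfl | hu
              · exact Finset.disjoint_of_subset_left hdS hsS.symm
              · rw [Finset.mem_singleton] at hu
                rw [hu]
                exact Finset.disjoint_of_subset_left hpS hsS.symm)
            hTT
          have hle := le_nu H M hMm
          have hdnp : d ≠ p := by
            intro hh
            rw [hh, disjoint_self, Finset.bot_eq_empty] at hdp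
            have hnonempty := evset_nonempty p
            rw [hdp] at hnonempty
            exact Finset.not_nonempty_empty hnonempty
          rw [Finset.card_insert_of_notMem (fun hh => hdnp (Finset.mem_singleton.mp hh)),
            Finset.card_singleton,
            Finset.card_union_of_disjoint (Finset.disjoint_left.mpr
              (fun A hA hA' => hFnR A hA (Finset.mem_of_mem_erase hA'))),
            Finset.card_erase_of_mem hR0] at hMc
          have hpos : 0 < P.Rfam.card := Finset.card_pos.mpr ⟨R0, hR0⟩
          omega
        -- distinctness facts
        have hvr : ∀ u w : α, u ∈ P.W → w ∈ R0 → u ≠ w :=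
          fun u w hu hw hh => hWR u hu (by rw [hh]; exact hw)
        have hvr11 : e.1 ≠ r1 := hvr _ _ he1W hr1R
        have hvr12 : e.1 ≠ r2 := hvr _ _ he1W hr2R
        have hvr13 : e.1 ≠ r3 := hvr _ _ he1W hr3R
        have hvr21 : e.2.1 ≠ r1 := hvr _ _ he2W hr1R
        have hvr22 : e.2.1 ≠ r2 := hvr _ _ he2W hr2R
        have hvr23 : e.2.1 ≠ r3 := hvr _ _ he2W hr3R
        have hvr31 : e.2.2 ≠ r1 := hvr _ _ he3W hr1R
        have hvr32 : e.2.2 ≠ r2 := hvr _ _ he3W hr2R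
        have hvr33 : e.2.2 ≠ r3 := hvr _ _ he3W hr3R
        have hvv12 : e.1 ≠ e.2.1 := fun h => Finset.disjoint_left.mp H.h12 hv1 (h ▸ hv2)
        have hvv13 : e.1 ≠ e.2.2 := fun h => Finset.disjoint_left.mp H.h13 hv1 (h ▸ hv3)
        have hvv23 : e.2.1 ≠ e.2.2 := fun h => Finset.disjoint_left.mp H.h23 hv2 (h ▸ hv3)
        have hrr12 : r1 ≠ r2 := fun h => Finset.disjoint_left.mp H.h12 hr1 (h ▸ hr2)
        have hrr13 : r1 ≠ r3 := fun h => Finset.disjoint_left.mp H.h13 hr1 (h ▸ hr3)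
        have hrr23 : r2 ≠ r3 := fun h => Finset.disjoint_left.mp H.h23 hr2 (h ▸ hr3)
        obtain ⟨g1, g2, g3⟩ := g
        have hg1V : g1 ∈ H.V1 := H.mem1 _ hgE
        have hg2V : g2 ∈ H.V2 := H.mem2 _ hgE
        have hg3V : g3 ∈ H.V3 := H.mem3 _ hgE
        have hc1 : g1 = e.1 ∨ g1 = r1 := by
          have h6 : g1 ∈ ({e.1, e.2.1, e.2.2, r1, r2, r3} : Finset α) :=
            hgS (by simp [evset])
          rw [Finset.mem_insert, Finset.mem_insert, Finset.mem_insert,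
            Finset.mem_insert, Finset.mem_insert, Finset.mem_singleton] at h6
          rcases h6 with h | h | h | h | h | h
          · exact Or.inl h
          · exfalso; rw [h] at hg1V; exact Finset.disjoint_left.mp H.h12 hg1V hv2
          · exfalso; rw [h] at hg1V; exact Finset.disjoint_left.mp H.h13 hg1V hv3
          · exact Or.inr h
          · exfalso; rw [h] at hg1V; exact Finset.disjoint_left.mp H.h12 hg1V hr2
          · exfalso; rw [h] at hg1V; exact Finset.disjoint_left.mp H.h13 hg1V hr3
        have hc2 : g2 = e.2.1 ∨ g2 = r2 := by
          have h6 : g2 ∈ ({e.1, e.2.1, e.2.2, r1, r2, r3} : Finset α) :=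
            hgS (by simp [evset])
          rw [Finset.mem_insert, Finset.mem_insert, Finset.mem_insert,
            Finset.mem_insert, Finset.mem_insert, Finset.mem_singleton] at h6
          rcases h6 with h | h | h | h | h | h
          · exfalso; rw [h] at hg2V; exact Finset.disjoint_left.mp H.h12 hv1 hg2V
          · exact Or.inl h
          · exfalso; rw [h] at hg2V; exact Finset.disjoint_left.mp H.h23 hg2V hv3
          · exfalso; rw [h] at hg2V; exact Finset.disjoint_left.mp H.h12 hr1 hg2V
          · exact Or.inr h
          · exfalso; rw [h] at hg2V; exact Finset.disjoint_left.mp H.h23 hg2V hr3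
        have hc3 : g3 = e.2.2 ∨ g3 = r3 := by
          have h6 : g3 ∈ ({e.1, e.2.1, e.2.2, r1, r2, r3} : Finset α) :=
            hgS (by simp [evset])
          rw [Finset.mem_insert, Finset.mem_insert, Finset.mem_insert,
            Finset.mem_insert, Finset.mem_insert, Finset.mem_singleton] at h6
          rcases h6 with h | h | h | h | h | h
          · exfalso; rw [h] at hg3V; exact Finset.disjoint_left.mp H.h13 hv1 hg3V
          · exfalso; rw [h] at hg3V; exact Finset.disjoint_left.mp H.h23 hv2 hg3V
          · exact Or.inl h
          · exfalso; rw [h] at hg3V; exact Finset.disjoint_left.mp H.h13 hr1 hg3V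
          · exfalso; rw [h] at hg3V; exact Finset.disjoint_left.mp H.h23 hr2 hg3V
          · exact Or.inr h
        have hSsub : ∀ u1 u2 u3 : α,
            u1 ∈ ({e.1, e.2.1, e.2.2, r1, r2, r3} : Finset α) →
            u2 ∈ ({e.1, e.2.1, e.2.2, r1, r2, r3} : Finset α) →
            u3 ∈ ({e.1, e.2.1, e.2.2, r1, r2, r3} : Finset α) →
            evset (u1, u2, u3) ⊆ ({e.1, e.2.1, e.2.2, r1, r2, r3} : Finset α) := by
          intro u1 u2 u3 h1 h2 h3 u hu
          rcases mem_evset_s8.mp hu with rfl | rfl | rfl <;> assumption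
        rcases hc1 with h1 | h1 <;> rcases hc2 with h2 | h2 <;> rcases hc3 with h3 | h3 <;>
          rw [h1, h2, h3] at hgE hgS hgnot
        · exact hgnot (by simp [FanoEdges])
        · -- (e.1, e.2.1, r3) with partner (r1, r2, e.2.2)
          refine endgame (e.1, e.2.1, r3) (r1, r2, e.2.2) hgE hg3 ?_ hgS
            (hSsub _ _ _ (by simp) (by simp) (by simp))
          rw [Finset.disjoint_left]
          intro u hu hu'
          rcases mem_evset_s8.mp hu with rfl | rfl | rfl <;>
            rcases mem_evset_s8.mp hu' with h | h | h <;>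
            first
              | exact hvr11 h | exact hvr12 h | exact hvr13 h
              | exact hvr21 h | exact hvr22 h | exact hvr23 h
              | exact hvr31 h | exact hvr32 h | exact hvr33 h
              | exact hvr11 h.symm | exact hvr12 h.symm | exact hvr13 h.symm
              | exact hvr21 h.symm | exact hvr22 h.symm | exact hvr23 h.symm
              | exact hvr31 h.symm | exact hvr32 h.symm | exact hvr33 h.symm
              | exact hvv12 h | exact hvv13 h | exact hvv23 h
              | exact hvv12 h.symm | exact hvv13 h.symm | exact hvv23 h.symm
              | exact hrr12 h | exact hrr13 h | exact hrr23 h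
              | exact hrr12 h.symm | exact hrr13 h.symm | exact hrr23 h.symm
        · refine endgame (e.1, r2, e.2.2) (r1, e.2.1, r3) hgE hg2 ?_ hgS
            (hSsub _ _ _ (by simp) (by simp) (by simp))
          rw [Finset.disjoint_left]
          intro u hu hu'
          rcases mem_evset_s8.mp hu with rfl | rfl | rfl <;>
            rcases mem_evset_s8.mp hu' with h | h | h <;>
            first
              | exact hvr11 h | exact hvr12 h | exact hvr13 h
              | exact hvr21 h | exact hvr22 h | exact hvr23 h
              | exact hvr31 h | exact hvr32 h | exact hvr33 h
              | exact hvr11 h.symm | exact hvr12 h.symm | exact hvr13 h.symm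
              | exact hvr21 h.symm | exact hvr22 h.symm | exact hvr23 h.symm
              | exact hvr31 h.symm | exact hvr32 h.symm | exact hvr33 h.symm
              | exact hvv12 h | exact hvv13 h | exact hvv23 h
              | exact hvv12 h.symm | exact hvv13 h.symm | exact hvv23 h.symm
              | exact hrr12 h | exact hrr13 h | exact hrr23 h
              | exact hrr12 h.symm | exact hrr13 h.symm | exact hrr23 h.symm
        · exact hgnot (by simp [FanoEdges])
        · refine endgame (r1, e.2.1, e.2.2) (e.1, r2, r3) hgE hg1 ?_ hgS
            (hSsub _ _ _ (by simp) (by simp) (by simp))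
          rw [Finset.disjoint_left]
          intro u hu hu'
          rcases mem_evset_s8.mp hu with rfl | rfl | rfl <;>
            rcases mem_evset_s8.mp hu' with h | h | h <;>
            first
              | exact hvr11 h | exact hvr12 h | exact hvr13 h
              | exact hvr21 h | exact hvr22 h | exact hvr23 h
              | exact hvr31 h | exact hvr32 h | exact hvr33 h
              | exact hvr11 h.symm | exact hvr12 h.symm | exact hvr13 h.symm
              | exact hvr21 h.symm | exact hvr22 h.symm | exact hvr23 h.symm
              | exact hvr31 h.symm | exact hvr32 h.symm | exact hvr33 h.symm
              | exact hvv12 h | exact hvv13 h | exact hvv23 h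
              | exact hvv12 h.symm | exact hvv13 h.symm | exact hvv23 h.symm
              | exact hrr12 h | exact hrr13 h | exact hrr23 h
              | exact hrr12 h.symm | exact hrr13 h.symm | exact hrr23 h.symm
        · exact hgnot (by simp [FanoEdges])
        · exact hgnot (by simp [FanoEdges])
        · refine endgame (r1, r2, r3) e hgE he ?_ hgS
            (hSsub _ _ _ (by simp) (by simp) (by simp))
          rw [Finset.disjoint_left]
          intro u hu hu'
          rcases mem_evset_s8.mp hu with rfl | rfl | rfl <;>
            rcases mem_evset_s8.mp hu' with h | h | h <;>
            first
              | exact hvr11 h | exact hvr12 h | exact hvr13 h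
              | exact hvr21 h | exact hvr22 h | exact hvr23 h
              | exact hvr31 h | exact hvr32 h | exact hvr33 h
              | exact hvr11 h.symm | exact hvr12 h.symm | exact hvr13 h.symm
              | exact hvr21 h.symm | exact hvr22 h.symm | exact hvr23 h.symm
              | exact hvr31 h.symm | exact hvr32 h.symm | exact hvr33 h.symm
              | exact hvv12 h | exact hvv13 h | exact hvv23 h
              | exact hvv12 h.symm | exact hvv13 h.symm | exact hvv23 h.symm
              | exact hrr12 h | exact hrr13 h | exact hrr23 h
              | exact hrr12 h.symm | exact hrr13 h.symm | exact hrr23 h.symm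
  exact ⟨hEH, hFR, hM, hEH⟩
end
end
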